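/- arXiv:1304.3121 — 2 statements merged into one kernel-verified Lean document; each statement's English description precedes it below -/
import Mathlib

section
/- Invariance of width with respect to associativity: if (t, V) is a wiring decomposition of a net with boundaries N : l → r that has width k, and t′ is a wiring expression equivalent to t up to associativity of ';' and '⊗', then (t′, V) is also a wiring decomposition of width k, and ⟦t′⟧_V has left boundary l and right boundary r. -/
/-! Core definitions: nets with boundaries (Sobocinski et al.),
composition, tensor, isomorphism, step firing semantics, ports,
connections, networks, bases, wiring expressions and decompositions. -/

namespace NWB

/-- A net with boundaries `N : k → l` (without the contention axioms,
which are packaged separately in `IsContention`). -/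
structure NetB (k l : ℕ) : Type 1 where
  P : Type
  T : Type
  finP : Finite P
  finT : Finite T
  pre : T → Set P
  post : T → Set P
  src : T → Set (Fin k)
  tgt : T → Set (Fin l)
  con : T → T → Prop

/-- The contention relation axioms: reflexive, symmetric, and forced whenever
two transitions share a pre-place, post-place, or boundary port. -/
def IsContention {k l : ℕ} (N : NetB k l) : Prop :=
  (∀ t, N.con t t) ∧ (∀ t u, N.con t u → N.con u t) ∧
  (∀ t u,
    ((N.pre t ∩ N.pre u).Nonempty ∨ (N.post t ∩ N.post u).Nonempty ∨
     (N.src t ∩ N.src u).Nonempty ∨ (N.tgt t ∩ N.tgt u).Nonempty) → N.con t u)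

def setPre {k l : ℕ} (N : NetB k l) (U : Set N.T) : Set N.P := ⋃ u ∈ U, N.pre u
def setPost {k l : ℕ} (N : NetB k l) (U : Set N.T) : Set N.P := ⋃ u ∈ U, N.post u
def setSrc {k l : ℕ} (N : NetB k l) (U : Set N.T) : Set (Fin k) := ⋃ u ∈ U, N.src u
def setTgt {k l : ℕ} (N : NetB k l) (U : Set N.T) : Set (Fin l) := ⋃ u ∈ U, N.tgt u

/-- Mutually independent set of transitions: no two distinct members in contention. -/
def MI {k l : ℕ} (N : NetB k l) (U : Set N.T) : Prop :=
  ∀ u ∈ U, ∀ v ∈ U, N.con u v → u = v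

/-- Contention lifted to sets of transitions. -/
def setCon {k l : ℕ} (N : NetB k l) (U V : Set N.T) : Prop :=
  ∃ u ∈ U, ∃ v ∈ V, N.con u v

/-- A synchronisation between `M : l → m` and `N : m → n`. -/
structure Sync {l m n : ℕ} (M : NetB l m) (N : NetB m n) where
  U : Set M.T
  V : Set N.T
  miU : MI M U
  miV : MI N V
  bd : setTgt M U = setSrc N V

def Sync.Trivial {l m n : ℕ} {M : NetB l m} {N : NetB m n} (s : Sync M N) : Prop :=
  s.U = ∅ ∧ s.V = ∅

/-- A minimal synchronisation: non-trivial, and every componentwise-smaller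
synchronisation is trivial or equal to it. -/
def Sync.Minimal {l m n : ℕ} {M : NetB l m} {N : NetB m n} (s : Sync M N) : Prop :=
  ¬ s.Trivial ∧
  ∀ s' : Sync M N, s'.U ⊆ s.U → s'.V ⊆ s.V → (s'.Trivial ∨ (s'.U = s.U ∧ s'.V = s.V))

theorem sync_finite {l m n : ℕ} (M : NetB l m) (N : NetB m n) : Finite (Sync M N) := by
  haveI := M.finT; haveI := N.finT
  apply Finite.of_injective (fun s : Sync M N => (s.U, s.V))
  intro s s' h
  simp only [Prod.mk.injEq] at h
  obtain ⟨h1, h2⟩ := h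
  cases s; cases s'
  simp_all

/-- Composition along a common boundary. -/
def comp {l m n : ℕ} (M : NetB l m) (N : NetB m n) : NetB l n where
  P := M.P ⊕ N.P
  T := {s : Sync M N // s.Minimal}
  finP := by haveI := M.finP; haveI := N.finP; exact inferInstance
  finT := by haveI := sync_finite M N; exact inferInstance
  pre s := (Sum.inl '' setPre M s.1.U) ∪ (Sum.inr '' setPre N s.1.V)
  post s := (Sum.inl '' setPost M s.1.U) ∪ (Sum.inr '' setPost N s.1.V)
  src s := setSrc M s.1.U
  tgt s := setTgt N s.1.V
  con s s' := setCon M s.1.U s'.1.U ∨ setCon N s.1.V s'.1.V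

/-- Tensor product of nets with boundaries. -/
def tensor {l m k n : ℕ} (M : NetB l m) (N : NetB k n) : NetB (l + k) (m + n) where
  P := M.P ⊕ N.P
  T := M.T ⊕ N.T
  finP := by haveI := M.finP; haveI := N.finP; exact inferInstance
  finT := by haveI := M.finT; haveI := N.finT; exact inferInstance
  pre t := match t with
    | Sum.inl t => Sum.inl '' M.pre t
    | Sum.inr t => Sum.inr '' N.pre t
  post t := match t with
    | Sum.inl t => Sum.inl '' M.post t
    | Sum.inr t => Sum.inr '' N.post t
  src t := match t with
    | Sum.inl t => Fin.castAdd k '' M.src t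
    | Sum.inr t => Fin.natAdd l '' N.src t
  tgt t := match t with
    | Sum.inl t => Fin.castAdd n '' M.tgt t
    | Sum.inr t => Fin.natAdd m '' N.tgt t
  con t u := match t, u with
    | Sum.inl t, Sum.inl u => M.con t u
    | Sum.inr t, Sum.inr u => N.con t u
    | _, _ => False

/-- Isomorphism of nets with boundaries: bijections on places and transitions
preserving pre-sets, post-sets, boundary maps and contention. -/
structure NetIso {k l : ℕ} (M N : NetB k l) where
  ep : M.P ≃ N.P
  et : M.T ≃ N.T
  pre_eq : ∀ t, N.pre (et t) = ep '' M.pre t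
  post_eq : ∀ t, N.post (et t) = ep '' M.post t
  src_eq : ∀ t, N.src (et t) = M.src t
  tgt_eq : ∀ t, N.tgt (et t) = M.tgt t
  con_iff : ∀ t u, N.con (et t) (et u) ↔ M.con t u

def Iso {k l : ℕ} (M N : NetB k l) : Prop := Nonempty (NetIso M N)

/-- Transport a net along equalities of its boundary sizes. -/
def castNet {k l k' l' : ℕ} (h1 : k = k') (h2 : l = l') (N : NetB k l) : NetB k' l' where
  P := N.P
  T := N.T
  finP := N.finP
  finT := N.finT
  pre := N.pre
  post := N.post
  src t := Fin.cast h1 '' N.src t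
  tgt t := Fin.cast h2 '' N.tgt t
  con := N.con

def emptyNet : NetB 0 0 where
  P := Empty
  T := Empty
  finP := inferInstance
  finT := inferInstance
  pre t := t.elim
  post t := t.elim
  src t := t.elim
  tgt t := t.elim
  con t _ := t.elim

/-- The step firing semantics: `Fires N X X' α β` iff the LTS `⟦N⟧` has a
transition `X →⟨α,β⟩ X'`. -/
def Fires {k l : ℕ} (N : NetB k l) (X X' : Set N.P) (α : Set (Fin k)) (β : Set (Fin l)) :
    Prop :=
  ∃ U : Set N.T, MI N U ∧ setPre N U ⊆ X ∧ setPost N U ∩ X = ∅ ∧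
    X' = (X \ setPre N U) ∪ setPost N U ∧ setSrc N U = α ∧ setTgt N U = β

/-! ### Ports, connections and networks -/

/-- The ports of a net: an in-port and an out-port for each place,
together with the left and right boundary ports. -/
def Port {k l : ℕ} (N : NetB k l) : Type := (N.P ⊕ N.P) ⊕ (Fin k ⊕ Fin l)

def portIn {k l : ℕ} {N : NetB k l} (p : N.P) : Port N := Sum.inl (Sum.inl p)
def portOut {k l : ℕ} {N : NetB k l} (p : N.P) : Port N := Sum.inl (Sum.inr p)
def bLeft {k l : ℕ} {N : NetB k l} (i : Fin k) : Port N := Sum.inr (Sum.inl i)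
def bRight {k l : ℕ} {N : NetB k l} (j : Fin l) : Port N := Sum.inr (Sum.inr j)

/-- The portset of a transition. -/
def tports {k l : ℕ} (N : NetB k l) (t : N.T) : Set (Port N) :=
  (portOut '' N.pre t) ∪ (portIn '' N.post t) ∪ (bLeft '' N.src t) ∪ (bRight '' N.tgt t)

/-- The connection of a port `q`: the portsets (minus `q`) of all transitions
properly connecting to `q`. -/
def conn {k l : ℕ} (N : NetB k l) (q : Port N) : Set (Set (Port N)) :=
  { K | ∃ t : N.T, {q} ⊂ tports N t ∧ K = tports N t \ {q} }

/-- The connection of `q` restricted to a set `R` of ports. -/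
def connR {k l : ℕ} (N : NetB k l) (R : Set (Port N)) (q : Port N) :
    Set (Set (Port N)) :=
  { K' | ∃ K ∈ conn N q, (K ∩ R).Nonempty ∧ K' = K ∩ R }

/-- Extended ports of the left part of an oriented partition. -/
def eportsL {k l : ℕ} (N : NetB k l) (Pl : Set N.P) : Set (Port N) :=
  (portIn '' Pl) ∪ (portOut '' Pl) ∪ Set.range (bLeft (N := N))

/-- Extended ports of the right part of an oriented partition. -/
def eportsR {k l : ℕ} (N : NetB k l) (Pr : Set N.P) : Set (Port N) :=
  (portIn '' Pr) ∪ (portOut '' Pr) ∪ Set.range (bRight (N := N))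

/-- The network `net(P_l → P_r)`. -/
def networkLR {k l : ℕ} (N : NetB k l) (Pl Pr : Set N.P) :
    Set (Set (Set (Port N))) :=
  { c | ∃ q ∈ eportsL N Pl, c = connR N (eportsR N Pr) q }

/-- The network `net(P_r → P_l)`. -/
def networkRL {k l : ℕ} (N : NetB k l) (Pl Pr : Set N.P) :
    Set (Set (Set (Port N))) :=
  { c | ∃ q ∈ eportsR N Pr, c = connR N (eportsL N Pl) q }

/-- `b` is a basis of the network `M`: every connection in `M` is a union of
basis connections. -/
def IsBasis {C : Type} {m : ℕ} (b : Fin m → Set C) (M : Set (Set C)) : Prop :=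
  ∀ c ∈ M, ∃ S : Finset (Fin m), c = ⋃ i ∈ S, b i

/-- The dimension of a network: the size of its smallest basis. -/
noncomputable def netDim {C : Type} (M : Set (Set C)) : ℕ :=
  sInf { m | ∃ b : Fin m → Set C, IsBasis b M }

/-- Purity of a composition `N_l ; N_r`: no transition of either component
connects to two different shared boundary ports. -/
def Pure {k n l : ℕ} (Nl : NetB k n) (Nr : NetB n l) : Prop :=
  (∀ j : Fin n, ∀ K ∈ conn Nl (bRight j), ∀ i : Fin n, bRight i ∉ K) ∧
  (∀ j : Fin n, ∀ K ∈ conn Nr (bLeft j), ∀ i : Fin n, bLeft i ∉ K)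

/-! ### Wiring expressions and decompositions -/

/-- Nets with boundaries of arbitrary boundary sizes. -/
def NetS : Type 1 := Σ (k : ℕ) (l : ℕ), NetB k l

/-- Composition on `NetS` (junk value on boundary mismatch). -/
def seqS (X Y : NetS) : NetS :=
  if h : X.2.1 = Y.1 then ⟨X.1, Y.2.1, comp (castNet rfl h X.2.2) Y.2.2⟩
  else ⟨0, 0, emptyNet⟩

def tenS (X Y : NetS) : NetS := ⟨X.1 + Y.1, X.2.1 + Y.2.1, tensor X.2.2 Y.2.2⟩

/-- Wiring expressions: binary trees with `;` and `⊗` nodes and variables at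
the leaves. -/
inductive WExpr (V : Type) : Type
  | leaf : V → WExpr V
  | seq : WExpr V → WExpr V → WExpr V
  | ten : WExpr V → WExpr V → WExpr V

/-- Semantics of a wiring expression under a variable assignment. -/
def sem {V : Type} (A : V → NetS) : WExpr V → NetS
  | .leaf x => A x
  | .seq t₁ t₂ => seqS (sem A t₁) (sem A t₂)
  | .ten t₁ t₂ => tenS (sem A t₁) (sem A t₂)

/-- Compatibility of an assignment with an expression: at each `;` node the
shared boundaries match. -/
def WT {V : Type} (A : V → NetS) : WExpr V → Prop
  | .leaf _ => True
  | .seq t₁ t₂ => WT A t₁ ∧ WT A t₂ ∧ (sem A t₁).2.1 = (sem A t₂).1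
  | .ten t₁ t₂ => WT A t₁ ∧ WT A t₂

/-- The wiring decomposition `(t, A)` has width `w`: every leaf net has
boundaries and number of places `≤ w`, and every subexpression has
boundaries `≤ w`. -/
def HasWidth {V : Type} (A : V → NetS) (w : ℕ) : WExpr V → Prop
  | .leaf x => (A x).1 ≤ w ∧ Nat.card (A x).2.2.P ≤ w ∧ (A x).2.1 ≤ w
  | .seq t₁ t₂ => HasWidth A w t₁ ∧ HasWidth A w t₂ ∧
      (sem A (.seq t₁ t₂)).1 ≤ w ∧ (sem A (.seq t₁ t₂)).2.1 ≤ w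
  | .ten t₁ t₂ => HasWidth A w t₁ ∧ HasWidth A w t₂ ∧
      (sem A (.ten t₁ t₂)).1 ≤ w ∧ (sem A (.ten t₁ t₂)).2.1 ≤ w

/-- `(t, A)` is a wiring decomposition of `N : k → l`: the assignment maps
variables to genuine nets with boundaries, is compatible with `t`, and
`⟦t⟧_A ≅ N`. -/
def IsDecompOf {V : Type} {k l : ℕ} (A : V → NetS) (t : WExpr V) (N : NetB k l) : Prop :=
  (∀ x, IsContention (A x).2.2) ∧ WT A t ∧
  ∃ (h1 : (sem A t).1 = k) (h2 : (sem A t).2.1 = l),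
    Iso (castNet h1 h2 (sem A t).2.2) N

/-- A net has decomposition width `w` if it has a wiring decomposition of
width `w`. -/
def HasDecompWidth {k l : ℕ} (N : NetB k l) (w : ℕ) : Prop :=
  ∃ (Var : Type) (A : Var → NetS) (t : WExpr Var),
    IsDecompOf A t N ∧ HasWidth A w t

/-- A pure wiring decomposition: at every `;` node the composition of the two
subexpression nets is pure. -/
def PureExpr {V : Type} (A : V → NetS) : WExpr V → Prop
  | .leaf _ => True
  | .seq t₁ t₂ => PureExpr A t₁ ∧ PureExpr A t₂ ∧
      ∀ (h : (sem A t₁).2.1 = (sem A t₂).1),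
        Pure (castNet rfl h (sem A t₁).2.2) (sem A t₂).2.2
  | .ten t₁ t₂ => PureExpr A t₁ ∧ PureExpr A t₂

/-- One step of reassociation of `;` or `⊗`, anywhere inside an expression. -/
inductive AssocStep {V : Type} : WExpr V → WExpr V → Prop
  | seqAssoc (a b c : WExpr V) : AssocStep (.seq (.seq a b) c) (.seq a (.seq b c))
  | tenAssoc (a b c : WExpr V) : AssocStep (.ten (.ten a b) c) (.ten a (.ten b c))
  | seqCongrL {a a' : WExpr V} (b : WExpr V) :
      AssocStep a a' → AssocStep (.seq a b) (.seq a' b)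
  | seqCongrR (a : WExpr V) {b b' : WExpr V} :
      AssocStep b b' → AssocStep (.seq a b) (.seq a b')
  | tenCongrL {a a' : WExpr V} (b : WExpr V) :
      AssocStep a a' → AssocStep (.ten a b) (.ten a' b)
  | tenCongrR (a : WExpr V) {b b' : WExpr V} :
      AssocStep b b' → AssocStep (.ten a b) (.ten a b')

/-- Equivalence of wiring expressions up to associativity of `;` and `⊗`. -/
def AssocEquiv {V : Type} : WExpr V → WExpr V → Prop := Relation.EqvGen AssocStep

/-! ### Concrete families of nets -/

/-- The clique net `C_n : 0 → 0`, with the minimal contention relation. -/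
def clique (n : ℕ) : NetB 0 0 where
  P := Fin n
  T := {p : Fin n × Fin n // p.1 ≠ p.2}
  finP := inferInstance
  finT := inferInstance
  pre t := {t.1.1}
  post t := {t.1.2}
  src _ := ∅
  tgt _ := ∅
  con t u := t.1.1 = u.1.1 ∨ t.1.2 = u.1.2

/-- The subset net `P_n : 0 → 0`: a place `S` (= `none`), places `[n]`, and for
each `A ⊆ [n]` a transition `S → A`; the minimal contention relation is total
since all pre-sets are `{S}`. -/
def subsetNet (n : ℕ) : NetB 0 0 where
  P := Option (Fin n)
  T := Set (Fin n)
  finP := inferInstance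
  finT := inferInstance
  pre _ := {none}
  post A := some '' A
  src _ := ∅
  tgt _ := ∅
  con _ _ := True

/-- The tree net `T_Δ^{n,k} : 0 → 0`: places are nodes of the complete n-ary
tree of depth k (lists over `Fin n` of length ≤ k); each non-leaf node has a
single transition to the set of its n children. The minimal contention
relation is equality. -/
def treeD (n k : ℕ) : NetB 0 0 where
  P := {l : List (Fin n) // l.length ≤ k}
  T := {l : List (Fin n) // l.length < k}
  finP := (List.finite_length_le (Fin n) k).to_subtype
  finT := (List.finite_length_lt (Fin n) k).to_subtype
  pre t := {⟨t.1, t.2.le⟩}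
  post t := {p | ∃ i : Fin n, p.1 = t.1 ++ [i]}
  src _ := ∅
  tgt _ := ∅
  con t u := t = u

/-- The tree net `T_Λ^{n,k} : 0 → 0`: as `T_Δ^{n,k}` but with a separate
transition from each non-leaf node to each of its children. The minimal
contention relation relates transitions with the same parent node. -/
def treeL (n k : ℕ) : NetB 0 0 where
  P := {l : List (Fin n) // l.length ≤ k}
  T := {l : List (Fin n) // l.length < k} × Fin n
  finP := (List.finite_length_le (Fin n) k).to_subtype
  finT := by
    haveI : Finite {l : List (Fin n) // l.length < k} :=
      (List.finite_length_lt (Fin n) k).to_subtype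
    exact inferInstance
  pre t := {⟨t.1.1, t.1.2.le⟩}
  post t := {p | p.1 = t.1.1 ++ [t.2]}
  src _ := ∅
  tgt _ := ∅
  con t u := t.1 = u.1

/-- The grid net `G_n : 0 → 0`: places `[n] × [n]`, a transition from each
place to its right neighbour and to its lower neighbour; the minimal
contention relation relates transitions sharing a pre-place or post-place. -/
def grid (n : ℕ) : NetB 0 0 where
  P := Fin n × Fin n
  T := {e : (Fin n × Fin n) × (Fin n × Fin n) //
        (e.2.1 = e.1.1 ∧ (e.2.2 : ℕ) = (e.1.2 : ℕ) + 1) ∨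
        ((e.2.1 : ℕ) = (e.1.1 : ℕ) + 1 ∧ e.2.2 = e.1.2)}
  finP := inferInstance
  finT := inferInstance
  pre e := {e.1.1}
  post e := {e.1.2}
  src _ := ∅
  tgt _ := ∅
  con t u := t.1.1 = u.1.1 ∨ t.1.2 = u.1.2

end NWB

namespace NWB


/-! ### Auxiliary development for width invariance -/

section Aux

open Set

/-- Union of images over a set. -/
lemma biUnion_inter_of_overlap {T β : Type*} (f : T → Set β) {U A B : Set T}
    (hA : A ⊆ U) (hB : B ⊆ U)
    (hf : ∀ u ∈ U, ∀ v ∈ U, (f u ∩ f v).Nonempty → u = v) :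
    (⋃ t ∈ A ∩ B, f t) = (⋃ t ∈ A, f t) ∩ (⋃ t ∈ B, f t) := by
  ext x
  simp only [mem_iUnion, mem_inter_iff, exists_prop]
  constructor
  · rintro ⟨t, ⟨htA, htB⟩, hx⟩
    exact ⟨⟨t, htA, hx⟩, ⟨t, htB, hx⟩⟩
  · rintro ⟨⟨t, htA, hx⟩, ⟨u, huB, hx'⟩⟩
    have : t = u := hf t (hA htA) u (hB huB) ⟨x, hx, hx'⟩
    subst this
    exact ⟨t, ⟨htA, huB⟩, hx⟩

lemma biUnion_diff_of_overlap {T β : Type*} (f : T → Set β) {U A B : Set T}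
    (hA : A ⊆ U) (hB : B ⊆ U)
    (hf : ∀ u ∈ U, ∀ v ∈ U, (f u ∩ f v).Nonempty → u = v) :
    (⋃ t ∈ A \ B, f t) = (⋃ t ∈ A, f t) \ (⋃ t ∈ B, f t) := by
  ext x
  simp only [mem_iUnion, mem_diff, exists_prop]
  constructor
  · rintro ⟨t, ⟨htA, htB⟩, hx⟩
    refine ⟨⟨t, htA, hx⟩, ?_⟩
    rintro ⟨u, huB, hx'⟩
    exact htB (hf t (hA htA) u (hB huB) ⟨x, hx, hx'⟩ ▸ huB)
  · rintro ⟨⟨t, htA, hx⟩, hnB⟩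
    refine ⟨t, ⟨htA, fun htB => hnB ⟨t, htB, hx⟩⟩, hx⟩

variable {k l : ℕ} {M : NetB k l}

lemma MI.mono {U A : Set M.T} (hU : MI M U) (hA : A ⊆ U) : MI M A :=
  fun u hu v hv h => hU u (hA hu) v (hA hv) h

lemma tgt_overlap (hM : IsContention M) {U : Set M.T} (hU : MI M U) :
    ∀ u ∈ U, ∀ v ∈ U, (M.tgt u ∩ M.tgt v).Nonempty → u = v :=
  fun u hu v hv h => hU u hu v hv (hM.2.2 u v (Or.inr (Or.inr (Or.inr h))))

lemma src_overlap (hM : IsContention M) {U : Set M.T} (hU : MI M U) :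
    ∀ u ∈ U, ∀ v ∈ U, (M.src u ∩ M.src v).Nonempty → u = v :=
  fun u hu v hv h => hU u hu v hv (hM.2.2 u v (Or.inr (Or.inr (Or.inl h))))

end Aux

section SyncLemmas

variable {a b c : ℕ} {M : NetB a b} {N : NetB b c}

lemma sync_eq {s s' : Sync M N} (hU : s.U = s'.U) (hV : s.V = s'.V) : s = s' := by
  cases s; cases s'; simp_all

lemma sync_nontrivial_iff (s : Sync M N) :
    ¬ s.Trivial ↔ (s.U.Nonempty ∨ s.V.Nonempty) := by
  unfold Sync.Trivial
  rw [not_and_or]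
  simp [Set.nonempty_iff_ne_empty]

/-- Intersection of two syncs whose components live inside ambient MI sets. -/
lemma exists_sync_inter (hM : IsContention M) (hN : IsContention N)
    {𝕌 : Set M.T} {𝕍 : Set N.T} (h𝕌 : MI M 𝕌) (h𝕍 : MI N 𝕍)
    (s₁ s₂ : Sync M N) (h1U : s₁.U ⊆ 𝕌) (h1V : s₁.V ⊆ 𝕍)
    (h2U : s₂.U ⊆ 𝕌) (h2V : s₂.V ⊆ 𝕍) :
    ∃ m : Sync M N, m.U = s₁.U ∩ s₂.U ∧ m.V = s₁.V ∩ s₂.V := by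
  refine ⟨⟨s₁.U ∩ s₂.U, s₁.V ∩ s₂.V, ?_, ?_, ?_⟩, rfl, rfl⟩
  · exact MI.mono h𝕌 (fun x hx => h1U hx.1)
  · exact MI.mono h𝕍 (fun x hx => h1V hx.1)
  · show setTgt M (s₁.U ∩ s₂.U) = setSrc N (s₁.V ∩ s₂.V)
    rw [setTgt, biUnion_inter_of_overlap _ h1U h2U (tgt_overlap hM h𝕌),
      setSrc, biUnion_inter_of_overlap _ h1V h2V (src_overlap hN h𝕍)]
    rw [← setTgt, ← setTgt, ← setSrc, ← setSrc, s₁.bd, s₂.bd]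

/-- Difference of two syncs whose components live inside ambient MI sets. -/
lemma exists_sync_diff (hM : IsContention M) (hN : IsContention N)
    {𝕌 : Set M.T} {𝕍 : Set N.T} (h𝕌 : MI M 𝕌) (h𝕍 : MI N 𝕍)
    (s₁ s₂ : Sync M N) (h1U : s₁.U ⊆ 𝕌) (h1V : s₁.V ⊆ 𝕍)
    (h2U : s₂.U ⊆ 𝕌) (h2V : s₂.V ⊆ 𝕍) :
    ∃ m : Sync M N, m.U = s₁.U \ s₂.U ∧ m.V = s₁.V \ s₂.V := by
  refine ⟨⟨s₁.U \ s₂.U, s₁.V \ s₂.V, ?_, ?_, ?_⟩, rfl, rfl⟩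
  · exact MI.mono h𝕌 (fun x hx => h1U hx.1)
  · exact MI.mono h𝕍 (fun x hx => h1V hx.1)
  · show setTgt M (s₁.U \ s₂.U) = setSrc N (s₁.V \ s₂.V)
    rw [setTgt, biUnion_diff_of_overlap _ h1U h2U (tgt_overlap hM h𝕌),
      setSrc, biUnion_diff_of_overlap _ h1V h2V (src_overlap hN h𝕍)]
    rw [← setTgt, ← setTgt, ← setSrc, ← setSrc, s₁.bd, s₂.bd]

end SyncLemmas


section Cover

variable {a b c : ℕ} {M : NetB a b} {N : NetB b c}

/-- Every non-trivial sync has a minimal sync below it. -/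
lemma exists_minimal_le (s : Sync M N) (hs : ¬ s.Trivial) :
    ∃ m : Sync M N, m.Minimal ∧ m.U ⊆ s.U ∧ m.V ⊆ s.V := by
  haveI := M.finT; haveI := N.finT
  set F : Set (Set M.T × Set N.T) :=
    {p | ∃ m : Sync M N, ¬ m.Trivial ∧ m.U ⊆ s.U ∧ m.V ⊆ s.V ∧ p = (m.U, m.V)} with hF
  have hfin : F.Finite := Set.toFinite F
  have hne : F.Nonempty := ⟨(s.U, s.V), s, hs, le_refl _, le_refl _, rfl⟩
  obtain ⟨p, hp, hmin⟩ : ∃ p ∈ F, ∀ p' ∈ F, id p' ≤ id p → id p = id p' := by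
    obtain ⟨p, hp⟩ := Set.Finite.exists_minimal hfin hne
    exact ⟨p, hp.prop, fun p' hp' hle => (hp.eq_of_le hp' hle).symm⟩
  obtain ⟨m, hm, hmU, hmV, hpeq⟩ := hp
  subst hpeq
  refine ⟨m, ⟨hm, ?_⟩, hmU, hmV⟩
  intro s' hs'U hs'V
  by_cases htriv : s'.Trivial
  · exact Or.inl htriv
  · right
    have hmem : (s'.U, s'.V) ∈ F :=
      ⟨s', htriv, hs'U.trans hmU, hs'V.trans hmV, rfl⟩
    have hle : (s'.U, s'.V) ≤ (m.U, m.V) := ⟨hs'U, hs'V⟩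
    have := (hmin _ hmem hle).symm
    simp only [id] at this
    exact ⟨congrArg Prod.fst this, congrArg Prod.snd this⟩

/-- Cover lemma: every transition participating in a sync lies in a minimal
sub-sync. -/
lemma sync_cover_aux (hM : IsContention M) (hN : IsContention N) :
    ∀ n : ℕ, ∀ s : Sync M N, s.U.ncard + s.V.ncard ≤ n →
      (∀ u ∈ s.U, ∃ m : Sync M N, m.Minimal ∧ m.U ⊆ s.U ∧ m.V ⊆ s.V ∧ u ∈ m.U) ∧
      (∀ v ∈ s.V, ∃ m : Sync M N, m.Minimal ∧ m.U ⊆ s.U ∧ m.V ⊆ s.V ∧ v ∈ m.V) := by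
  haveI := M.finT; haveI := N.finT
  intro n
  induction n with
  | zero =>
    intro s hcard
    have hU : s.U = ∅ := by
      have := Set.ncard_eq_zero (s := s.U) (Set.toFinite _) |>.mp (by omega)
      exact this
    have hV : s.V = ∅ := by
      have := Set.ncard_eq_zero (s := s.V) (Set.toFinite _) |>.mp (by omega)
      exact this
    constructor <;> intro x hx <;> simp [hU, hV] at hx
  | succ n ih =>
    intro s hcard
    -- main step
    have key : ∀ (m : Sync M N), m.Minimal → m.U ⊆ s.U → m.V ⊆ s.V →
        ∃ s₁ : Sync M N, s₁.U = s.U \ m.U ∧ s₁.V = s.V \ m.V ∧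
          s₁.U.ncard + s₁.V.ncard ≤ n := by
      intro m hmmin hmU hmV
      obtain ⟨s₁, h1U, h1V⟩ := exists_sync_diff hM hN s.miU s.miV s m
        (le_refl _) (le_refl _) hmU hmV
      refine ⟨s₁, h1U, h1V, ?_⟩
      have hnt := (sync_nontrivial_iff m).mp hmmin.1
      have hUle : (s.U \ m.U).ncard ≤ s.U.ncard :=
        Set.ncard_le_ncard Set.diff_subset (Set.toFinite _)
      have hVle : (s.V \ m.V).ncard ≤ s.V.ncard :=
        Set.ncard_le_ncard Set.diff_subset (Set.toFinite _)
      rcases hnt with hne | hne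
      · have : (s.U \ m.U).ncard < s.U.ncard := by
          apply Set.ncard_lt_ncard _ (Set.toFinite _)
          exact (Set.ssubset_iff_of_subset Set.diff_subset).mpr
            ⟨hne.choose, hmU hne.choose_spec, fun h => h.2 hne.choose_spec⟩
        rw [h1U, h1V]; omega
      · have : (s.V \ m.V).ncard < s.V.ncard := by
          apply Set.ncard_lt_ncard _ (Set.toFinite _)
          exact (Set.ssubset_iff_of_subset Set.diff_subset).mpr
            ⟨hne.choose, hmV hne.choose_spec, fun h => h.2 hne.choose_spec⟩
        rw [h1U, h1V]; omega
    constructor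
    · intro u hu
      have hnt : ¬ s.Trivial := (sync_nontrivial_iff s).mpr (Or.inl ⟨u, hu⟩)
      obtain ⟨m, hmmin, hmU, hmV⟩ := exists_minimal_le s hnt
      by_cases hum : u ∈ m.U
      · exact ⟨m, hmmin, hmU, hmV, hum⟩
      · obtain ⟨s₁, h1U, h1V, h1card⟩ := key m hmmin hmU hmV
        obtain ⟨m', hm'min, hm'U, hm'V, hum'⟩ :=
          (ih s₁ h1card).1 u (by rw [h1U]; exact ⟨hu, hum⟩)
        exact ⟨m', hm'min, hm'U.trans (h1U ▸ Set.diff_subset),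
          hm'V.trans (h1V ▸ Set.diff_subset), hum'⟩
    · intro v hv
      have hnt : ¬ s.Trivial := (sync_nontrivial_iff s).mpr (Or.inr ⟨v, hv⟩)
      obtain ⟨m, hmmin, hmU, hmV⟩ := exists_minimal_le s hnt
      by_cases hvm : v ∈ m.V
      · exact ⟨m, hmmin, hmU, hmV, hvm⟩
      · obtain ⟨s₁, h1U, h1V, h1card⟩ := key m hmmin hmU hmV
        obtain ⟨m', hm'min, hm'U, hm'V, hvm'⟩ :=
          (ih s₁ h1card).2 v (by rw [h1V]; exact ⟨hv, hvm⟩)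
        exact ⟨m', hm'min, hm'U.trans (h1U ▸ Set.diff_subset),
          hm'V.trans (h1V ▸ Set.diff_subset), hvm'⟩

lemma sync_cover_U (hM : IsContention M) (hN : IsContention N) (s : Sync M N)
    {u : M.T} (hu : u ∈ s.U) :
    ∃ m : Sync M N, m.Minimal ∧ m.U ⊆ s.U ∧ m.V ⊆ s.V ∧ u ∈ m.U :=
  (sync_cover_aux hM hN _ s (le_refl _)).1 u hu

lemma sync_cover_V (hM : IsContention M) (hN : IsContention N) (s : Sync M N)
    {v : N.T} (hv : v ∈ s.V) :
    ∃ m : Sync M N, m.Minimal ∧ m.U ⊆ s.U ∧ m.V ⊆ s.V ∧ v ∈ m.V :=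
  (sync_cover_aux hM hN _ s (le_refl _)).2 v hv

/-- Two minimal syncs inside ambient MI sets sharing an element are equal. -/
lemma minimal_shared (hM : IsContention M) (hN : IsContention N)
    {𝕌 : Set M.T} {𝕍 : Set N.T} (h𝕌 : MI M 𝕌) (h𝕍 : MI N 𝕍)
    {m m' : Sync M N} (hm : m.Minimal) (hm' : m'.Minimal)
    (hmU : m.U ⊆ 𝕌) (hmV : m.V ⊆ 𝕍) (hm'U : m'.U ⊆ 𝕌) (hm'V : m'.V ⊆ 𝕍)
    (hsh : (m.U ∩ m'.U).Nonempty ∨ (m.V ∩ m'.V).Nonempty) : m = m' := by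
  obtain ⟨i, hiU, hiV⟩ := exists_sync_inter hM hN h𝕌 h𝕍 m m' hmU hmV hm'U hm'V
  have hint : ¬ i.Trivial := by
    rw [sync_nontrivial_iff]
    rcases hsh with h | h
    · exact Or.inl (hiU ▸ h)
    · exact Or.inr (hiV ▸ h)
  have h1 := hm.2 i (hiU ▸ Set.inter_subset_left) (hiV ▸ Set.inter_subset_left)
  have h2 := hm'.2 i (hiU ▸ Set.inter_subset_right) (hiV ▸ Set.inter_subset_right)
  rcases h1 with h1 | h1; · exact absurd h1 hint
  rcases h2 with h2 | h2; · exact absurd h2 hint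
  exact sync_eq (h1.1 ▸ h2.1) (h1.2 ▸ h2.2)

end Cover


section Flat

open Set

variable {a b c : ℕ} {M : NetB a b} {N : NetB b c}

/-- Flatten a set of composite transitions to its left components. -/
def flatU (S : Set (comp M N).T) : Set M.T := ⋃ m ∈ S, m.1.U
/-- Flatten a set of composite transitions to its right components. -/
def flatV (S : Set (comp M N).T) : Set N.T := ⋃ m ∈ S, m.1.V

lemma mem_flatU {S : Set (comp M N).T} {u : M.T} :
    u ∈ flatU S ↔ ∃ m ∈ S, u ∈ m.1.U := by simp [flatU]

lemma mem_flatV {S : Set (comp M N).T} {v : N.T} :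
    v ∈ flatV S ↔ ∃ m ∈ S, v ∈ m.1.V := by simp [flatV]

lemma flatU_mono {S S' : Set (comp M N).T} (h : S ⊆ S') : flatU S ⊆ flatU S' := by
  intro u hu; rw [mem_flatU] at *; obtain ⟨m, hm, hu⟩ := hu; exact ⟨m, h hm, hu⟩

lemma flatV_mono {S S' : Set (comp M N).T} (h : S ⊆ S') : flatV S ⊆ flatV S' := by
  intro u hu; rw [mem_flatV] at *; obtain ⟨m, hm, hu⟩ := hu; exact ⟨m, h hm, hu⟩

lemma flat_MI_U {S : Set (comp M N).T} (hS : MI (comp M N) S) : MI M (flatU S) := by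
  intro u hu v hv hcon
  obtain ⟨m, hm, hum⟩ := mem_flatU.mp hu
  obtain ⟨m', hm', hvm⟩ := mem_flatU.mp hv
  have : m = m' := hS m hm m' hm' (Or.inl ⟨u, hum, v, hvm, hcon⟩)
  subst this
  exact m.1.miU u hum v hvm hcon

lemma flat_MI_V {S : Set (comp M N).T} (hS : MI (comp M N) S) : MI N (flatV S) := by
  intro u hu v hv hcon
  obtain ⟨m, hm, hum⟩ := mem_flatV.mp hu
  obtain ⟨m', hm', hvm⟩ := mem_flatV.mp hv
  have : m = m' := hS m hm m' hm' (Or.inr ⟨u, hum, v, hvm, hcon⟩)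
  subst this
  exact m.1.miV u hum v hvm hcon

lemma flat_setPre (S : Set (comp M N).T) :
    setPre (comp M N) S =
      (Sum.inl '' setPre M (flatU S)) ∪ (Sum.inr '' setPre N (flatV S)) := by
  ext x
  constructor
  · intro hx
    obtain ⟨m, hm, hx⟩ := mem_iUnion₂.mp hx
    rcases hx with ⟨y, hy, rfl⟩ | ⟨y, hy, rfl⟩
    · obtain ⟨u, hu, hy⟩ := mem_iUnion₂.mp hy
      exact Set.mem_union_left _ ⟨y, mem_iUnion₂.mpr ⟨u, mem_flatU.mpr ⟨m, hm, hu⟩, hy⟩, rfl⟩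
    · obtain ⟨u, hu, hy⟩ := mem_iUnion₂.mp hy
      exact Set.mem_union_right _ ⟨y, mem_iUnion₂.mpr ⟨u, mem_flatV.mpr ⟨m, hm, hu⟩, hy⟩, rfl⟩
  · rintro (⟨y, hy, rfl⟩ | ⟨y, hy, rfl⟩)
    · obtain ⟨u, hu, hy⟩ := mem_iUnion₂.mp hy
      obtain ⟨m, hm, hum⟩ := mem_flatU.mp hu
      exact mem_iUnion₂.mpr ⟨m, hm, Set.mem_union_left _ ⟨y, mem_iUnion₂.mpr ⟨u, hum, hy⟩, rfl⟩⟩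
    · obtain ⟨u, hu, hy⟩ := mem_iUnion₂.mp hy
      obtain ⟨m, hm, hum⟩ := mem_flatV.mp hu
      exact mem_iUnion₂.mpr ⟨m, hm, Set.mem_union_right _ ⟨y, mem_iUnion₂.mpr ⟨u, hum, hy⟩, rfl⟩⟩

lemma flat_setPost (S : Set (comp M N).T) :
    setPost (comp M N) S =
      (Sum.inl '' setPost M (flatU S)) ∪ (Sum.inr '' setPost N (flatV S)) := by
  ext x
  constructor
  · intro hx
    obtain ⟨m, hm, hx⟩ := mem_iUnion₂.mp hx
    rcases hx with ⟨y, hy, rfl⟩ | ⟨y, hy, rfl⟩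
    · obtain ⟨u, hu, hy⟩ := mem_iUnion₂.mp hy
      exact Set.mem_union_left _ ⟨y, mem_iUnion₂.mpr ⟨u, mem_flatU.mpr ⟨m, hm, hu⟩, hy⟩, rfl⟩
    · obtain ⟨u, hu, hy⟩ := mem_iUnion₂.mp hy
      exact Set.mem_union_right _ ⟨y, mem_iUnion₂.mpr ⟨u, mem_flatV.mpr ⟨m, hm, hu⟩, hy⟩, rfl⟩
  · rintro (⟨y, hy, rfl⟩ | ⟨y, hy, rfl⟩)
    · obtain ⟨u, hu, hy⟩ := mem_iUnion₂.mp hy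
      obtain ⟨m, hm, hum⟩ := mem_flatU.mp hu
      exact mem_iUnion₂.mpr ⟨m, hm, Set.mem_union_left _ ⟨y, mem_iUnion₂.mpr ⟨u, hum, hy⟩, rfl⟩⟩
    · obtain ⟨u, hu, hy⟩ := mem_iUnion₂.mp hy
      obtain ⟨m, hm, hum⟩ := mem_flatV.mp hu
      exact mem_iUnion₂.mpr ⟨m, hm, Set.mem_union_right _ ⟨y, mem_iUnion₂.mpr ⟨u, hum, hy⟩, rfl⟩⟩

lemma flat_setSrc (S : Set (comp M N).T) :
    setSrc (comp M N) S = setSrc M (flatU S) := by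
  ext x
  simp only [setSrc, comp, flatU, mem_iUnion, exists_prop]
  aesop

lemma flat_setTgt (S : Set (comp M N).T) :
    setTgt (comp M N) S = setTgt N (flatV S) := by
  ext x
  simp only [setTgt, comp, flatV, mem_iUnion, exists_prop]
  aesop

lemma flat_tgt_src (S : Set (comp M N).T) :
    setTgt M (flatU S) = setSrc N (flatV S) := by
  ext x
  simp only [setTgt, setSrc, flatU, flatV, mem_iUnion, exists_prop]
  constructor
  · rintro ⟨u, ⟨m, hm, hum⟩, hx⟩
    have : x ∈ setSrc N m.1.V := by
      rw [← m.1.bd]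
      exact Set.mem_biUnion hum hx
    obtain ⟨v, hv, hxv⟩ := by
      simpa [setSrc, mem_iUnion] using this
    exact ⟨v, ⟨m, hm, hv⟩, hxv⟩
  · rintro ⟨v, ⟨m, hm, hvm⟩, hx⟩
    have : x ∈ setTgt M m.1.U := by
      rw [m.1.bd]
      exact Set.mem_biUnion hvm hx
    obtain ⟨u, hu, hxu⟩ := by
      simpa [setTgt, mem_iUnion] using this
    exact ⟨u, ⟨m, hm, hu⟩, hxu⟩

lemma flat_setCon (S S' : Set (comp M N).T) :
    setCon (comp M N) S S' ↔
      setCon M (flatU S) (flatU S') ∨ setCon N (flatV S) (flatV S') := by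
  simp only [setCon, comp, flatU, flatV, mem_iUnion, exists_prop]
  constructor
  · rintro ⟨m, hm, m', hm', h | h⟩
    · obtain ⟨u, hu, u', hu', hc⟩ := h
      exact Or.inl ⟨u, ⟨m, hm, hu⟩, u', ⟨m', hm', hu'⟩, hc⟩
    · obtain ⟨v, hv, v', hv', hc⟩ := h
      exact Or.inr ⟨v, ⟨m, hm, hv⟩, v', ⟨m', hm', hv'⟩, hc⟩
  · rintro (⟨u, ⟨m, hm, hu⟩, u', ⟨m', hm', hu'⟩, hc⟩ |
      ⟨v, ⟨m, hm, hv⟩, v', ⟨m', hm', hv'⟩, hc⟩)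
    · exact ⟨m, hm, m', hm', Or.inl ⟨u, hu, u', hu', hc⟩⟩
    · exact ⟨m, hm, m', hm', Or.inr ⟨v, hv, v', hv', hc⟩⟩

end Flat

section Contention

open Set

lemma isContention_comp {a b c : ℕ} {M : NetB a b} {N : NetB b c}
    (hM : IsContention M) (hN : IsContention N) : IsContention (comp M N) := by
  refine ⟨?_, ?_, ?_⟩
  · intro t
    have := (sync_nontrivial_iff t.1).mp t.2.1
    rcases this with ⟨u, hu⟩ | ⟨v, hv⟩
    · exact Or.inl ⟨u, hu, u, hu, hM.1 u⟩
    · exact Or.inr ⟨v, hv, v, hv, hN.1 v⟩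
  · rintro t u (⟨x, hx, y, hy, hc⟩ | ⟨x, hx, y, hy, hc⟩)
    · exact Or.inl ⟨y, hy, x, hx, hM.2.1 _ _ hc⟩
    · exact Or.inr ⟨y, hy, x, hx, hN.2.1 _ _ hc⟩
  · intro t u h
    rcases h with h | h | h | h
    · obtain ⟨x, hx1, hx2⟩ := h
      simp only [comp, mem_union, mem_image] at hx1 hx2
      rcases hx1 with ⟨p, hp, rfl⟩ | ⟨p, hp, rfl⟩
      · rcases hx2 with ⟨q, hq, hqe⟩ | ⟨q, hq, hqe⟩
        · obtain rfl : q = p := Sum.inl_injective hqe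
          obtain ⟨x', hx', hp1⟩ := by simpa [setPre, mem_iUnion] using hp
          obtain ⟨y', hy', hp2⟩ := by simpa [setPre, mem_iUnion] using hq
          exact Or.inl ⟨x', hx', y', hy', hM.2.2 _ _ (Or.inl ⟨q, hp1, hp2⟩)⟩
        · exact absurd hqe (by simp)
      · rcases hx2 with ⟨q, hq, hqe⟩ | ⟨q, hq, hqe⟩
        · exact absurd hqe (by simp)
        · obtain rfl : q = p := Sum.inr_injective hqe
          obtain ⟨x', hx', hp1⟩ := by simpa [setPre, mem_iUnion] using hp
          obtain ⟨y', hy', hp2⟩ := by simpa [setPre, mem_iUnion] using hq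
          exact Or.inr ⟨x', hx', y', hy', hN.2.2 _ _ (Or.inl ⟨q, hp1, hp2⟩)⟩
    · obtain ⟨x, hx1, hx2⟩ := h
      simp only [comp, mem_union, mem_image] at hx1 hx2
      rcases hx1 with ⟨p, hp, rfl⟩ | ⟨p, hp, rfl⟩
      · rcases hx2 with ⟨q, hq, hqe⟩ | ⟨q, hq, hqe⟩
        · obtain rfl : q = p := Sum.inl_injective hqe
          obtain ⟨x', hx', hp1⟩ := by simpa [setPost, mem_iUnion] using hp
          obtain ⟨y', hy', hp2⟩ := by simpa [setPost, mem_iUnion] using hq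
          exact Or.inl ⟨x', hx', y', hy', hM.2.2 _ _ (Or.inr (Or.inl ⟨q, hp1, hp2⟩))⟩
        · exact absurd hqe (by simp)
      · rcases hx2 with ⟨q, hq, hqe⟩ | ⟨q, hq, hqe⟩
        · exact absurd hqe (by simp)
        · obtain rfl : q = p := Sum.inr_injective hqe
          obtain ⟨x', hx', hp1⟩ := by simpa [setPost, mem_iUnion] using hp
          obtain ⟨y', hy', hp2⟩ := by simpa [setPost, mem_iUnion] using hq
          exact Or.inr ⟨x', hx', y', hy', hN.2.2 _ _ (Or.inr (Or.inl ⟨q, hp1, hp2⟩))⟩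
    · obtain ⟨x, hx1, hx2⟩ := h
      obtain ⟨x', hx', h1⟩ := by
        simpa [comp, setSrc, mem_iUnion] using hx1
      obtain ⟨y', hy', h2⟩ := by
        simpa [comp, setSrc, mem_iUnion] using hx2
      exact Or.inl ⟨x', hx', y', hy', hM.2.2 _ _ (Or.inr (Or.inr (Or.inl ⟨x, h1, h2⟩)))⟩
    · obtain ⟨x, hx1, hx2⟩ := h
      obtain ⟨x', hx', h1⟩ := by
        simpa [comp, setTgt, mem_iUnion] using hx1
      obtain ⟨y', hy', h2⟩ := by
        simpa [comp, setTgt, mem_iUnion] using hx2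
      exact Or.inr ⟨x', hx', y', hy', hN.2.2 _ _ (Or.inr (Or.inr (Or.inr ⟨x, h1, h2⟩)))⟩

lemma isContention_tensor {a b c d : ℕ} {M : NetB a b} {N : NetB c d}
    (hM : IsContention M) (hN : IsContention N) : IsContention (tensor M N) := by
  refine ⟨?_, ?_, ?_⟩
  · rintro (t | t)
    · exact hM.1 t
    · exact hN.1 t
  · rintro (t | t) (u | u) h
    · exact hM.2.1 _ _ h
    · exact h.elim
    · exact h.elim
    · exact hN.2.1 _ _ h
  · rintro (t | t) (u | u) h
    · apply hM.2.2
      rcases h with ⟨x, h1, h2⟩ | ⟨x, h1, h2⟩ | ⟨x, h1, h2⟩ | ⟨x, h1, h2⟩ <;>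
          simp only [tensor, mem_image] at h1 h2
      · obtain ⟨p, hp, rfl⟩ := h1
        obtain ⟨q, hq, hqe⟩ := h2
        cases Sum.inl_injective hqe
        exact Or.inl ⟨p, hp, hq⟩
      · obtain ⟨p, hp, rfl⟩ := h1
        obtain ⟨q, hq, hqe⟩ := h2
        cases Sum.inl_injective hqe
        exact Or.inr (Or.inl ⟨p, hp, hq⟩)
      · obtain ⟨p, hp, rfl⟩ := h1
        obtain ⟨q, hq, hqe⟩ := h2
        have hqp : q = p := by
          have := congrArg Fin.val hqe
          simp only [Fin.coe_castAdd] at this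
          exact Fin.ext this
        cases hqp
        exact Or.inr (Or.inr (Or.inl ⟨p, hp, hq⟩))
      · obtain ⟨p, hp, rfl⟩ := h1
        obtain ⟨q, hq, hqe⟩ := h2
        have hqp : q = p := by
          have := congrArg Fin.val hqe
          simp only [Fin.coe_castAdd] at this
          exact Fin.ext this
        cases hqp
        exact Or.inr (Or.inr (Or.inr ⟨p, hp, hq⟩))
    · exfalso
      rcases h with ⟨x, h1, h2⟩ | ⟨x, h1, h2⟩ | ⟨x, h1, h2⟩ | ⟨x, h1, h2⟩ <;>
          simp only [tensor, mem_image] at h1 h2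
      · obtain ⟨p, hp, rfl⟩ := h1; obtain ⟨q, hq, hqe⟩ := h2; exact absurd hqe (by simp)
      · obtain ⟨p, hp, rfl⟩ := h1; obtain ⟨q, hq, hqe⟩ := h2; exact absurd hqe (by simp)
      · obtain ⟨p, hp, rfl⟩ := h1; obtain ⟨q, hq, hqe⟩ := h2
        have := congrArg Fin.val hqe
        simp only [Fin.coe_castAdd, Fin.coe_natAdd] at this
        omega
      · obtain ⟨p, hp, rfl⟩ := h1; obtain ⟨q, hq, hqe⟩ := h2
        have := congrArg Fin.val hqe
        simp only [Fin.coe_castAdd, Fin.coe_natAdd] at this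
        omega
    · exfalso
      rcases h with ⟨x, h1, h2⟩ | ⟨x, h1, h2⟩ | ⟨x, h1, h2⟩ | ⟨x, h1, h2⟩ <;>
          simp only [tensor, mem_image] at h1 h2
      · obtain ⟨p, hp, rfl⟩ := h1; obtain ⟨q, hq, hqe⟩ := h2; exact absurd hqe (by simp)
      · obtain ⟨p, hp, rfl⟩ := h1; obtain ⟨q, hq, hqe⟩ := h2; exact absurd hqe (by simp)
      · obtain ⟨p, hp, rfl⟩ := h1; obtain ⟨q, hq, hqe⟩ := h2
        have := congrArg Fin.val hqe
        simp only [Fin.coe_castAdd, Fin.coe_natAdd] at this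
        omega
      · obtain ⟨p, hp, rfl⟩ := h1; obtain ⟨q, hq, hqe⟩ := h2
        have := congrArg Fin.val hqe
        simp only [Fin.coe_castAdd, Fin.coe_natAdd] at this
        omega
    · apply hN.2.2
      rcases h with ⟨x, h1, h2⟩ | ⟨x, h1, h2⟩ | ⟨x, h1, h2⟩ | ⟨x, h1, h2⟩ <;>
          simp only [tensor, mem_image] at h1 h2
      · obtain ⟨p, hp, rfl⟩ := h1
        obtain ⟨q, hq, hqe⟩ := h2
        cases Sum.inr_injective hqe
        exact Or.inl ⟨p, hp, hq⟩
      · obtain ⟨p, hp, rfl⟩ := h1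
        obtain ⟨q, hq, hqe⟩ := h2
        cases Sum.inr_injective hqe
        exact Or.inr (Or.inl ⟨p, hp, hq⟩)
      · obtain ⟨p, hp, rfl⟩ := h1
        obtain ⟨q, hq, hqe⟩ := h2
        have hqp : q = p := by
          have := congrArg Fin.val hqe
          simp only [Fin.coe_natAdd] at this
          exact Fin.ext (by omega)
        cases hqp
        exact Or.inr (Or.inr (Or.inl ⟨p, hp, hq⟩))
      · obtain ⟨p, hp, rfl⟩ := h1
        obtain ⟨q, hq, hqe⟩ := h2
        have hqp : q = p := by
          have := congrArg Fin.val hqe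
          simp only [Fin.coe_natAdd] at this
          exact Fin.ext (by omega)
        cases hqp
        exact Or.inr (Or.inr (Or.inr ⟨p, hp, hq⟩))

lemma isContention_castNet {k l k' l' : ℕ} (h1 : k = k') (h2 : l = l')
    {M : NetB k l} (hM : IsContention M) : IsContention (castNet h1 h2 M) := by
  subst h1; subst h2
  refine ⟨hM.1, hM.2.1, ?_⟩
  intro t u h
  apply hM.2.2
  rcases h with h | h | h | h
  · exact Or.inl h
  · exact Or.inr (Or.inl h)
  · obtain ⟨x, hx1, hx2⟩ := h
    simp only [castNet, mem_image] at hx1 hx2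
    obtain ⟨p, hp, rfl⟩ := hx1
    obtain ⟨q, hq, hqe⟩ := hx2
    cases (Fin.ext (congrArg Fin.val hqe) : q = p)
    exact Or.inr (Or.inr (Or.inl ⟨p, hp, hq⟩))
  · obtain ⟨x, hx1, hx2⟩ := h
    simp only [castNet, mem_image] at hx1 hx2
    obtain ⟨p, hp, rfl⟩ := hx1
    obtain ⟨q, hq, hqe⟩ := hx2
    cases (Fin.ext (congrArg Fin.val hqe) : q = p)
    exact Or.inr (Or.inr (Or.inr ⟨p, hp, hq⟩))

lemma isContention_empty : IsContention emptyNet :=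
  ⟨fun t => t.elim, fun t => t.elim, fun t => t.elim⟩

lemma sem_contention {Var : Type} {A : Var → NetS}
    (hA : ∀ x, IsContention (A x).2.2) :
    ∀ t : WExpr Var, IsContention (sem A t).2.2 := by
  intro t
  induction t with
  | leaf x => exact hA x
  | seq t₁ t₂ ih₁ ih₂ =>
    show IsContention (seqS (sem A t₁) (sem A t₂)).2.2
    by_cases h : (sem A t₁).2.1 = (sem A t₂).1
    · rw [show seqS (sem A t₁) (sem A t₂) = ⟨_, _, comp (castNet rfl h (sem A t₁).2.2) (sem A t₂).2.2⟩ from dif_pos h]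
      exact isContention_comp (isContention_castNet _ _ ih₁) ih₂
    · rw [show seqS (sem A t₁) (sem A t₂) = ⟨0, 0, emptyNet⟩ from dif_neg h]
      exact isContention_empty
  | ten t₁ t₂ ih₁ ih₂ =>
    exact isContention_tensor ih₁ ih₂

end Contention


section IsoUtils

open Set

variable {k l m n : ℕ}

/-- Identity isomorphism. -/
def NetIso.refl (M : NetB k l) : NetIso M M where
  ep := Equiv.refl _
  et := Equiv.refl _
  pre_eq t := by simp
  post_eq t := by simp
  src_eq t := rfl
  tgt_eq t := rfl
  con_iff t u := Iff.rfl

/-- Inverse isomorphism. -/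
def NetIso.symm {M N : NetB k l} (i : NetIso M N) : NetIso N M where
  ep := i.ep.symm
  et := i.et.symm
  pre_eq t := by
    rw [show t = i.et (i.et.symm t) from (i.et.apply_symm_apply t).symm]
    rw [i.pre_eq, Equiv.symm_image_image, Equiv.symm_apply_apply]
  post_eq t := by
    rw [show t = i.et (i.et.symm t) from (i.et.apply_symm_apply t).symm]
    rw [i.post_eq, Equiv.symm_image_image, Equiv.symm_apply_apply]
  src_eq t := by
    conv_rhs => rw [show t = i.et (i.et.symm t) from (i.et.apply_symm_apply t).symm,
      i.src_eq]
  tgt_eq t := by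
    conv_rhs => rw [show t = i.et (i.et.symm t) from (i.et.apply_symm_apply t).symm,
      i.tgt_eq]
  con_iff t u := by
    conv_rhs => rw [show t = i.et (i.et.symm t) from (i.et.apply_symm_apply t).symm,
      show u = i.et (i.et.symm u) from (i.et.apply_symm_apply u).symm]
    exact (i.con_iff _ _).symm

/-- Composition of isomorphisms. -/
def NetIso.trans {M N O : NetB k l} (i : NetIso M N) (j : NetIso N O) :
    NetIso M O where
  ep := i.ep.trans j.ep
  et := i.et.trans j.et
  pre_eq t := by
    show O.pre (j.et (i.et t)) = (j.ep ∘ i.ep) '' M.pre t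
    rw [j.pre_eq, i.pre_eq, Set.image_comp]
  post_eq t := by
    show O.post (j.et (i.et t)) = (j.ep ∘ i.ep) '' M.post t
    rw [j.post_eq, i.post_eq, Set.image_comp]
  src_eq t := by
    show O.src (j.et (i.et t)) = M.src t
    rw [j.src_eq, i.src_eq]
  tgt_eq t := by
    show O.tgt (j.et (i.et t)) = M.tgt t
    rw [j.tgt_eq, i.tgt_eq]
  con_iff t u := by
    show O.con (j.et (i.et t)) (j.et (i.et u)) ↔ _
    rw [j.con_iff, i.con_iff]

/-- `castNet` along `rfl` is isomorphic to the original net. -/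
def castNetIsoRfl (M : NetB k l) : NetIso (castNet rfl rfl M) M where
  ep := Equiv.refl _
  et := Equiv.refl _
  pre_eq t := by simp [castNet]; exact (Set.image_id _).symm
  post_eq t := by simp [castNet]; exact (Set.image_id _).symm
  src_eq t := by
    show M.src t = Fin.cast rfl '' M.src t
    simp [Fin.cast_refl]
  tgt_eq t := by
    show M.tgt t = Fin.cast rfl '' M.tgt t
    simp [Fin.cast_refl]
  con_iff t u := Iff.rfl

section Images

variable {M M' : NetB k l} (i : NetIso M M')

lemma setPre_image (U : Set M.T) : setPre M' (i.et '' U) = i.ep '' setPre M U := by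
  ext x
  simp only [setPre, mem_iUnion, Set.mem_image, exists_prop]
  constructor
  · rintro ⟨u', ⟨u, hu, rfl⟩, hx⟩
    rw [i.pre_eq] at hx
    obtain ⟨p, hp, rfl⟩ := hx
    exact ⟨p, ⟨u, hu, hp⟩, rfl⟩
  · rintro ⟨p, ⟨u, hu, hp⟩, rfl⟩
    exact ⟨i.et u, ⟨u, hu, rfl⟩, by rw [i.pre_eq]; exact ⟨p, hp, rfl⟩⟩

lemma setPost_image (U : Set M.T) : setPost M' (i.et '' U) = i.ep '' setPost M U := by
  ext x
  simp only [setPost, mem_iUnion, Set.mem_image, exists_prop]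
  constructor
  · rintro ⟨u', ⟨u, hu, rfl⟩, hx⟩
    rw [i.post_eq] at hx
    obtain ⟨p, hp, rfl⟩ := hx
    exact ⟨p, ⟨u, hu, hp⟩, rfl⟩
  · rintro ⟨p, ⟨u, hu, hp⟩, rfl⟩
    exact ⟨i.et u, ⟨u, hu, rfl⟩, by rw [i.post_eq]; exact ⟨p, hp, rfl⟩⟩

lemma setSrc_image (U : Set M.T) : setSrc M' (i.et '' U) = setSrc M U := by
  ext x
  simp only [setSrc, mem_iUnion, Set.mem_image, exists_prop]
  constructor
  · rintro ⟨u', ⟨u, hu, rfl⟩, hx⟩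
    rw [i.src_eq] at hx
    exact ⟨u, hu, hx⟩
  · rintro ⟨u, hu, hx⟩
    exact ⟨i.et u, ⟨u, hu, rfl⟩, by rw [i.src_eq]; exact hx⟩

lemma setTgt_image (U : Set M.T) : setTgt M' (i.et '' U) = setTgt M U := by
  ext x
  simp only [setTgt, mem_iUnion, Set.mem_image, exists_prop]
  constructor
  · rintro ⟨u', ⟨u, hu, rfl⟩, hx⟩
    rw [i.tgt_eq] at hx
    exact ⟨u, hu, hx⟩
  · rintro ⟨u, hu, hx⟩
    exact ⟨i.et u, ⟨u, hu, rfl⟩, by rw [i.tgt_eq]; exact hx⟩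

lemma MI_image {U : Set M.T} (hU : MI M U) : MI M' (i.et '' U) := by
  rintro u' ⟨u, hu, rfl⟩ v' ⟨v, hv, rfl⟩ hcon
  rw [i.con_iff] at hcon
  exact congrArg i.et (hU u hu v hv hcon)

lemma setCon_image (U V : Set M.T) :
    setCon M' (i.et '' U) (i.et '' V) ↔ setCon M U V := by
  constructor
  · rintro ⟨u', ⟨u, hu, rfl⟩, v', ⟨v, hv, rfl⟩, hcon⟩
    exact ⟨u, hu, v, hv, (i.con_iff _ _).mp hcon⟩
  · rintro ⟨u, hu, v, hv, hcon⟩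
    exact ⟨i.et u, ⟨u, hu, rfl⟩, i.et v, ⟨v, hv, rfl⟩, (i.con_iff _ _).mpr hcon⟩

end Images

section CompCongr

variable {M M' : NetB k l} {N N' : NetB l m}

/-- Transport a synchronisation along isomorphisms of components. -/
def syncMap (i : NetIso M M') (j : NetIso N N') (s : Sync M N) : Sync M' N' where
  U := i.et '' s.U
  V := j.et '' s.V
  miU := MI_image i s.miU
  miV := MI_image j s.miV
  bd := by rw [setTgt_image, setSrc_image, s.bd]

lemma syncMap_symm (i : NetIso M M') (j : NetIso N N') (s : Sync M N) :
    syncMap i.symm j.symm (syncMap i j s) = s := by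
  apply sync_eq
  · show i.et.symm '' (i.et '' s.U) = s.U
    exact Equiv.symm_image_image _ _
  · show j.et.symm '' (j.et '' s.V) = s.V
    exact Equiv.symm_image_image _ _

lemma syncMap_symm' (i : NetIso M M') (j : NetIso N N') (s : Sync M' N') :
    syncMap i j (syncMap i.symm j.symm s) = s := by
  apply sync_eq
  · show i.et '' (i.et.symm '' s.U) = s.U
    exact Equiv.image_symm_image _ _
  · show j.et '' (j.et.symm '' s.V) = s.V
    exact Equiv.image_symm_image _ _

lemma syncMap_trivial (i : NetIso M M') (j : NetIso N N') (s : Sync M N) :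
    (syncMap i j s).Trivial ↔ s.Trivial := by
  unfold Sync.Trivial syncMap
  simp [Set.image_eq_empty]

lemma syncMap_minimal (i : NetIso M M') (j : NetIso N N') (s : Sync M N)
    (hs : s.Minimal) : (syncMap i j s).Minimal := by
  constructor
  · rw [syncMap_trivial]; exact hs.1
  · intro s' hU hV
    have hU' : (syncMap i.symm j.symm s').U ⊆ s.U := by
      show i.et.symm '' s'.U ⊆ s.U
      intro x hx
      obtain ⟨y, hy, rfl⟩ := hx
      have := hU hy
      obtain ⟨u, hu, rfl⟩ := this
      rwa [Equiv.symm_apply_apply]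
    have hV' : (syncMap i.symm j.symm s').V ⊆ s.V := by
      show j.et.symm '' s'.V ⊆ s.V
      intro x hx
      obtain ⟨y, hy, rfl⟩ := hx
      have := hV hy
      obtain ⟨u, hu, rfl⟩ := this
      rwa [Equiv.symm_apply_apply]
    rcases hs.2 _ hU' hV' with h | h
    · left
      rw [← syncMap_symm' i j s']
      exact (syncMap_trivial _ _ _).mpr h
    · right
      have := congrArg (syncMap i j) (sync_eq h.1 h.2 : syncMap i.symm j.symm s' =
        ⟨s.U, s.V, s.miU, s.miV, s.bd⟩)
      rw [syncMap_symm' i j s'] at this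
      constructor
      · exact congrArg Sync.U this
      · exact congrArg Sync.V this

/-- Congruence of composition with respect to isomorphism. -/
def NetIso.compCongr (i : NetIso M M') (j : NetIso N N') :
    NetIso (comp M N) (comp M' N') where
  ep := Equiv.sumCongr i.ep j.ep
  et := {
    toFun := fun t => ⟨syncMap i j t.1, syncMap_minimal i j t.1 t.2⟩
    invFun := fun t => ⟨syncMap i.symm j.symm t.1, syncMap_minimal _ _ t.1 t.2⟩
    left_inv := fun t => by
      apply Subtype.ext
      exact syncMap_symm i j t.1
    right_inv := fun t => by
      apply Subtype.ext
      exact syncMap_symm' i j t.1 }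
  pre_eq t := by
    show (Sum.inl '' setPre M' (i.et '' t.1.U)) ∪ (Sum.inr '' setPre N' (j.et '' t.1.V))
      = Equiv.sumCongr i.ep j.ep ''
        ((Sum.inl '' setPre M t.1.U) ∪ (Sum.inr '' setPre N t.1.V))
    rw [setPre_image, setPre_image, Set.image_union, ← Set.image_comp, ← Set.image_comp,
      ← Set.image_comp, ← Set.image_comp]
    rfl
  post_eq t := by
    show (Sum.inl '' setPost M' (i.et '' t.1.U)) ∪ (Sum.inr '' setPost N' (j.et '' t.1.V))
      = Equiv.sumCongr i.ep j.ep ''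
        ((Sum.inl '' setPost M t.1.U) ∪ (Sum.inr '' setPost N t.1.V))
    rw [setPost_image, setPost_image, Set.image_union, ← Set.image_comp, ← Set.image_comp,
      ← Set.image_comp, ← Set.image_comp]
    rfl
  src_eq t := by
    show setSrc M' (i.et '' t.1.U) = setSrc M t.1.U
    rw [setSrc_image]
  tgt_eq t := by
    show setTgt N' (j.et '' t.1.V) = setTgt N t.1.V
    rw [setTgt_image]
  con_iff t u := by
    show setCon M' (i.et '' t.1.U) (i.et '' u.1.U) ∨
      setCon N' (j.et '' t.1.V) (j.et '' u.1.V) ↔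
        setCon M t.1.U u.1.U ∨ setCon N t.1.V u.1.V
    rw [setCon_image, setCon_image]

end CompCongr

/-- Congruence of tensor with respect to isomorphism. -/
def NetIso.tensorCongr {k' l' : ℕ} {M M' : NetB k l} {N N' : NetB k' l'}
    (i : NetIso M M') (j : NetIso N N') : NetIso (tensor M N) (tensor M' N') where
  ep := Equiv.sumCongr i.ep j.ep
  et := Equiv.sumCongr i.et j.et
  pre_eq t := by
    cases t with
    | inl t =>
      show Sum.inl '' M'.pre (i.et t) =
        (Equiv.sumCongr i.ep j.ep) '' (Sum.inl '' M.pre t)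
      rw [i.pre_eq, ← Set.image_comp, ← Set.image_comp]
      rfl
    | inr t =>
      show Sum.inr '' N'.pre (j.et t) =
        (Equiv.sumCongr i.ep j.ep) '' (Sum.inr '' N.pre t)
      rw [j.pre_eq, ← Set.image_comp, ← Set.image_comp]
      rfl
  post_eq t := by
    cases t with
    | inl t =>
      show Sum.inl '' M'.post (i.et t) =
        (Equiv.sumCongr i.ep j.ep) '' (Sum.inl '' M.post t)
      rw [i.post_eq, ← Set.image_comp, ← Set.image_comp]
      rfl
    | inr t =>
      show Sum.inr '' N'.post (j.et t) =
        (Equiv.sumCongr i.ep j.ep) '' (Sum.inr '' N.post t)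
      rw [j.post_eq, ← Set.image_comp, ← Set.image_comp]
      rfl
  src_eq t := by
    cases t with
    | inl t =>
      show Fin.castAdd _ '' M'.src (i.et t) = Fin.castAdd _ '' M.src t
      rw [i.src_eq]
    | inr t =>
      show Fin.natAdd _ '' N'.src (j.et t) = Fin.natAdd _ '' N.src t
      rw [j.src_eq]
  tgt_eq t := by
    cases t with
    | inl t =>
      show Fin.castAdd _ '' M'.tgt (i.et t) = Fin.castAdd _ '' M.tgt t
      rw [i.tgt_eq]
    | inr t =>
      show Fin.natAdd _ '' N'.tgt (j.et t) = Fin.natAdd _ '' N.tgt t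
      rw [j.tgt_eq]
  con_iff t u := by
    cases t <;> cases u <;>
      first
      | exact i.con_iff _ _
      | exact j.con_iff _ _
      | exact Iff.rfl

end IsoUtils


section Assoc

open Set

variable {a b c d : ℕ}

/-- Triple synchronisations between three composable nets. -/
structure Tri (M : NetB a b) (N : NetB b c) (O : NetB c d) where
  U : Set M.T
  V : Set N.T
  W : Set O.T
  miU : MI M U
  miV : MI N V
  miW : MI O W
  bd1 : setTgt M U = setSrc N V
  bd2 : setTgt N V = setSrc O W

variable {M : NetB a b} {N : NetB b c} {O : NetB c d}

def Tri.Trivial (x : Tri M N O) : Prop := x.U = ∅ ∧ x.V = ∅ ∧ x.W = ∅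

def Tri.Minimal (x : Tri M N O) : Prop :=
  ¬ x.Trivial ∧
  ∀ y : Tri M N O, y.U ⊆ x.U → y.V ⊆ x.V → y.W ⊆ x.W →
    y.Trivial ∨ (y.U = x.U ∧ y.V = x.V ∧ y.W = x.W)

lemma tri_eq {x y : Tri M N O} (h1 : x.U = y.U) (h2 : x.V = y.V)
    (h3 : x.W = y.W) : x = y := by
  cases x; cases y; simp_all

lemma flatU_empty : flatU (∅ : Set (comp M N).T) = ∅ := by simp [flatU]
lemma flatV_empty : flatV (∅ : Set (comp M N).T) = ∅ := by simp [flatV]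

/-- The canonical decomposition set of a sync into minimal syncs. -/
def SDec {a b c : ℕ} {M : NetB a b} {N : NetB b c} (s : Sync M N) :
    Set (comp M N).T := {m | m.1.U ⊆ s.U ∧ m.1.V ⊆ s.V}

lemma flatU_SDec {a b c : ℕ} {M : NetB a b} {N : NetB b c}
    (hM : IsContention M) (hN : IsContention N) (s : Sync M N) :
    flatU (SDec s) = s.U := by
  apply subset_antisymm
  · intro u hu
    obtain ⟨m, hm, hum⟩ := mem_flatU.mp hu
    exact hm.1 hum
  · intro u hu
    obtain ⟨m, hmmin, hmU, hmV, hum⟩ := sync_cover_U hM hN s hu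
    exact mem_flatU.mpr ⟨⟨m, hmmin⟩, ⟨hmU, hmV⟩, hum⟩

lemma flatV_SDec {a b c : ℕ} {M : NetB a b} {N : NetB b c}
    (hM : IsContention M) (hN : IsContention N) (s : Sync M N) :
    flatV (SDec s) = s.V := by
  apply subset_antisymm
  · intro v hv
    obtain ⟨m, hm, hvm⟩ := mem_flatV.mp hv
    exact hm.2 hvm
  · intro v hv
    obtain ⟨m, hmmin, hmU, hmV, hvm⟩ := sync_cover_V hM hN s hv
    exact mem_flatV.mpr ⟨⟨m, hmmin⟩, ⟨hmU, hmV⟩, hvm⟩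

lemma MI_SDec {a b c : ℕ} {M : NetB a b} {N : NetB b c}
    (hM : IsContention M) (hN : IsContention N) (s : Sync M N) :
    MI (comp M N) (SDec s) := by
  rintro m hm m' hm' hcon
  apply Subtype.ext
  apply minimal_shared hM hN s.miU s.miV m.2 m'.2 hm.1 hm.2 hm'.1 hm'.2
  rcases hcon with ⟨u, hu, u', hu', hc⟩ | ⟨v, hv, v', hv', hc⟩
  · have : u = u' := s.miU u (hm.1 hu) u' (hm'.1 hu') hc
    subst this
    exact Or.inl ⟨u, hu, hu'⟩
  · have : v = v' := s.miV v (hm.2 hv) v' (hm'.2 hv') hc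
    subst this
    exact Or.inr ⟨v, hv, hv'⟩

/-- A minimal sync whose components sit inside the flats of an MI set of
minimal syncs is a member of that set. -/
lemma mem_of_sub_flat {a b c : ℕ} {M : NetB a b} {N : NetB b c}
    (hM : IsContention M) (hN : IsContention N)
    {S : Set (comp M N).T} (hS : MI (comp M N) S) (m : (comp M N).T)
    (hU : m.1.U ⊆ flatU S) (hV : m.1.V ⊆ flatV S) : m ∈ S := by
  have hnt := (sync_nontrivial_iff m.1).mp m.2.1
  rcases hnt with ⟨u, hu⟩ | ⟨v, hv⟩
  · obtain ⟨m', hm', hum'⟩ := mem_flatU.mp (hU hu)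
    have : m.1 = m'.1 := minimal_shared hM hN (flat_MI_U hS) (flat_MI_V hS)
      m.2 m'.2 hU hV (fun x hx => mem_flatU.mpr ⟨m', hm', hx⟩)
      (fun x hx => mem_flatV.mpr ⟨m', hm', hx⟩) (Or.inl ⟨u, hu, hum'⟩)
    exact (Subtype.ext this) ▸ hm'
  · obtain ⟨m', hm', hvm'⟩ := mem_flatV.mp (hV hv)
    have : m.1 = m'.1 := minimal_shared hM hN (flat_MI_U hS) (flat_MI_V hS)
      m.2 m'.2 hU hV (fun x hx => mem_flatU.mpr ⟨m', hm', hx⟩)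
      (fun x hx => mem_flatV.mpr ⟨m', hm', hx⟩) (Or.inr ⟨v, hv, hvm'⟩)
    exact (Subtype.ext this) ▸ hm'

variable (hM : IsContention M) (hN : IsContention N) (hO : IsContention O)

/-- The tri-sync of a transition of `(M;N);O`. -/
def triL (t : (comp (comp M N) O).T) : Tri M N O where
  U := flatU t.1.U
  V := flatV t.1.U
  W := t.1.V
  miU := flat_MI_U t.1.miU
  miV := flat_MI_V t.1.miU
  miW := t.1.miV
  bd1 := flat_tgt_src t.1.U
  bd2 := by rw [← flat_setTgt]; exact t.1.bd

/-- The tri-sync of a transition of `M;(N;O)`. -/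
def triR (t : (comp M (comp N O)).T) : Tri M N O where
  U := t.1.U
  V := flatU t.1.V
  W := flatV t.1.V
  miU := t.1.miU
  miV := flat_MI_U t.1.miV
  miW := flat_MI_V t.1.miV
  bd1 := by rw [← flat_setSrc]; exact t.1.bd
  bd2 := flat_tgt_src t.1.V

include hM hN hO in
lemma triL_minimal (t : (comp (comp M N) O).T) : (triL t).Minimal := by
  constructor
  · rintro ⟨h1, h2, h3⟩
    apply t.2.1
    refine ⟨?_, h3⟩
    by_contra hne
    obtain ⟨m, hm⟩ := Set.nonempty_iff_ne_empty.mpr hne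
    have := (sync_nontrivial_iff m.1).mp m.2.1
    rcases this with ⟨u, hu⟩ | ⟨v, hv⟩
    · have h1' : flatU t.1.U = ∅ := h1
      have : u ∈ flatU t.1.U := mem_flatU.mpr ⟨m, hm, hu⟩
      rw [h1'] at this; exact this
    · have h2' : flatV t.1.U = ∅ := h2
      have : v ∈ flatV t.1.U := mem_flatV.mpr ⟨m, hm, hv⟩
      rw [h2'] at this; exact this
  · intro y hyU hyV hyW
    -- the sync (y.U, y.V)
    set sy : Sync M N := ⟨y.U, y.V, y.miU, y.miV, y.bd1⟩ with hsy
    set S' : Set (comp M N).T := {m | m ∈ t.1.U ∧ m.1.U ⊆ y.U ∧ m.1.V ⊆ y.V}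
      with hS'
    have hflatU : flatU S' = y.U := by
      apply subset_antisymm
      · intro u hu
        obtain ⟨m, hm, hum⟩ := mem_flatU.mp hu
        exact hm.2.1 hum
      · intro u hu
        obtain ⟨m, hm, hum⟩ := mem_flatU.mp (hyU hu)
        obtain ⟨i, hiU, hiV⟩ := exists_sync_inter hM hN
          (flat_MI_U t.1.miU) (flat_MI_V t.1.miU) sy m.1 hyU hyV
          (fun x hx => mem_flatU.mpr ⟨m, hm, hx⟩)
          (fun x hx => mem_flatV.mpr ⟨m, hm, hx⟩)
        have hint : ¬ i.Trivial := (sync_nontrivial_iff i).mpr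
          (Or.inl ⟨u, by rw [hiU]; exact ⟨hu, hum⟩⟩)
        rcases m.2.2 i (hiU ▸ Set.inter_subset_right) (hiV ▸ Set.inter_subset_right)
          with h | h
        · exact absurd h hint
        · have hmU : m.1.U ⊆ y.U := by rw [← h.1, hiU]; exact Set.inter_subset_left
          have hmV : m.1.V ⊆ y.V := by rw [← h.2, hiV]; exact Set.inter_subset_left
          exact mem_flatU.mpr ⟨m, ⟨hm, hmU, hmV⟩, hum⟩
    have hflatV : flatV S' = y.V := by
      apply subset_antisymm
      · intro v hv
        obtain ⟨m, hm, hvm⟩ := mem_flatV.mp hv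
        exact hm.2.2 hvm
      · intro v hv
        obtain ⟨m, hm, hvm⟩ := mem_flatV.mp (hyV hv)
        obtain ⟨i, hiU, hiV⟩ := exists_sync_inter hM hN
          (flat_MI_U t.1.miU) (flat_MI_V t.1.miU) sy m.1 hyU hyV
          (fun x hx => mem_flatU.mpr ⟨m, hm, hx⟩)
          (fun x hx => mem_flatV.mpr ⟨m, hm, hx⟩)
        have hint : ¬ i.Trivial := (sync_nontrivial_iff i).mpr
          (Or.inr ⟨v, by rw [hiV]; exact ⟨hv, hvm⟩⟩)
        rcases m.2.2 i (hiU ▸ Set.inter_subset_right) (hiV ▸ Set.inter_subset_right)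
          with h | h
        · exact absurd h hint
        · have hmU : m.1.U ⊆ y.U := by rw [← h.1, hiU]; exact Set.inter_subset_left
          have hmV : m.1.V ⊆ y.V := by rw [← h.2, hiV]; exact Set.inter_subset_left
          exact mem_flatV.mpr ⟨m, ⟨hm, hmU, hmV⟩, hvm⟩
    -- the sync (S', y.W) of ((M;N), O)
    set s' : Sync (comp M N) O :=
      ⟨S', y.W, MI.mono t.1.miU (fun m hm => hm.1), y.miW, by
        rw [flat_setTgt, hflatV, y.bd2]⟩ with hs'
    rcases t.2.2 s' (fun m hm => hm.1) hyW with h | h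
    · left
      obtain ⟨h1, h2⟩ := h
      refine ⟨?_, ?_, h2⟩
      · rw [← hflatU]
        show flatU s'.U = ∅
        rw [h1, flatU_empty]
      · rw [← hflatV]
        show flatV s'.U = ∅
        rw [h1, flatV_empty]
    · right
      obtain ⟨h1, h2⟩ := h
      refine ⟨?_, ?_, h2⟩
      · rw [← hflatU]
        show flatU s'.U = flatU t.1.U
        rw [h1]
      · rw [← hflatV]
        show flatV s'.U = flatV t.1.U
        rw [h1]

include hM hN hO in
lemma triR_minimal (t : (comp M (comp N O)).T) : (triR t).Minimal := by
  constructor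
  · rintro ⟨h1, h2, h3⟩
    apply t.2.1
    refine ⟨h1, ?_⟩
    by_contra hne
    obtain ⟨m, hm⟩ := Set.nonempty_iff_ne_empty.mpr hne
    have := (sync_nontrivial_iff m.1).mp m.2.1
    rcases this with ⟨u, hu⟩ | ⟨v, hv⟩
    · have h2' : flatU t.1.V = ∅ := h2
      have : u ∈ flatU t.1.V := mem_flatU.mpr ⟨m, hm, hu⟩
      rw [h2'] at this; exact this
    · have h3' : flatV t.1.V = ∅ := h3
      have : v ∈ flatV t.1.V := mem_flatV.mpr ⟨m, hm, hv⟩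
      rw [h3'] at this; exact this
  · intro y hyU hyV hyW
    set sy : Sync N O := ⟨y.V, y.W, y.miV, y.miW, y.bd2⟩ with hsy
    set S' : Set (comp N O).T := {m | m ∈ t.1.V ∧ m.1.U ⊆ y.V ∧ m.1.V ⊆ y.W}
      with hS'
    have hflatU : flatU S' = y.V := by
      apply subset_antisymm
      · intro u hu
        obtain ⟨m, hm, hum⟩ := mem_flatU.mp hu
        exact hm.2.1 hum
      · intro u hu
        obtain ⟨m, hm, hum⟩ := mem_flatU.mp (hyV hu)
        obtain ⟨i, hiU, hiV⟩ := exists_sync_inter hN hO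
          (flat_MI_U t.1.miV) (flat_MI_V t.1.miV) sy m.1 hyV hyW
          (fun x hx => mem_flatU.mpr ⟨m, hm, hx⟩)
          (fun x hx => mem_flatV.mpr ⟨m, hm, hx⟩)
        have hint : ¬ i.Trivial := (sync_nontrivial_iff i).mpr
          (Or.inl ⟨u, by rw [hiU]; exact ⟨hu, hum⟩⟩)
        rcases m.2.2 i (hiU ▸ Set.inter_subset_right) (hiV ▸ Set.inter_subset_right)
          with h | h
        · exact absurd h hint
        · have hmU : m.1.U ⊆ y.V := by rw [← h.1, hiU]; exact Set.inter_subset_left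
          have hmV : m.1.V ⊆ y.W := by rw [← h.2, hiV]; exact Set.inter_subset_left
          exact mem_flatU.mpr ⟨m, ⟨hm, hmU, hmV⟩, hum⟩
    have hflatV : flatV S' = y.W := by
      apply subset_antisymm
      · intro v hv
        obtain ⟨m, hm, hvm⟩ := mem_flatV.mp hv
        exact hm.2.2 hvm
      · intro v hv
        obtain ⟨m, hm, hvm⟩ := mem_flatV.mp (hyW hv)
        obtain ⟨i, hiU, hiV⟩ := exists_sync_inter hN hO
          (flat_MI_U t.1.miV) (flat_MI_V t.1.miV) sy m.1 hyV hyW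
          (fun x hx => mem_flatU.mpr ⟨m, hm, hx⟩)
          (fun x hx => mem_flatV.mpr ⟨m, hm, hx⟩)
        have hint : ¬ i.Trivial := (sync_nontrivial_iff i).mpr
          (Or.inr ⟨v, by rw [hiV]; exact ⟨hv, hvm⟩⟩)
        rcases m.2.2 i (hiU ▸ Set.inter_subset_right) (hiV ▸ Set.inter_subset_right)
          with h | h
        · exact absurd h hint
        · have hmU : m.1.U ⊆ y.V := by rw [← h.1, hiU]; exact Set.inter_subset_left
          have hmV : m.1.V ⊆ y.W := by rw [← h.2, hiV]; exact Set.inter_subset_left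
          exact mem_flatV.mpr ⟨m, ⟨hm, hmU, hmV⟩, hvm⟩
    set s' : Sync M (comp N O) :=
      ⟨y.U, S', y.miU, MI.mono t.1.miV (fun m hm => hm.1), by
        rw [flat_setSrc, hflatU, ← y.bd1]⟩ with hs'
    rcases t.2.2 s' hyU (fun m hm => hm.1) with h | h
    · left
      obtain ⟨h1, h2⟩ := h
      refine ⟨h1, ?_, ?_⟩
      · rw [← hflatU]
        show flatU s'.V = ∅
        rw [h2, flatU_empty]
      · rw [← hflatV]
        show flatV s'.V = ∅
        rw [h2, flatV_empty]
    · right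
      obtain ⟨h1, h2⟩ := h
      refine ⟨h1, ?_, ?_⟩
      · rw [← hflatU]
        show flatU s'.V = flatU t.1.V
        rw [h2]
      · rw [← hflatV]
        show flatV s'.V = flatV t.1.V
        rw [h2]

end Assoc


section Assoc2

open Set

variable {a b c d : ℕ} {M : NetB a b} {N : NetB b c} {O : NetB c d}

lemma SDec_congr {s s' : Sync M N} (h1 : s.U = s'.U) (h2 : s.V = s'.V) :
    SDec s = SDec s' := by
  unfold SDec
  rw [h1, h2]

lemma SDec_eq_of_flat (hM : IsContention M) (hN : IsContention N)
    {S : Set (comp M N).T} (hS : MI (comp M N) S) (s : Sync M N)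
    (h1 : s.U = flatU S) (h2 : s.V = flatV S) : SDec s = S := by
  apply subset_antisymm
  · intro m hm
    exact mem_of_sub_flat hM hN hS m (h1 ▸ hm.1) (h2 ▸ hm.2)
  · intro m hm
    constructor
    · rw [h1]; exact fun x hx => mem_flatU.mpr ⟨m, hm, hx⟩
    · rw [h2]; exact fun x hx => mem_flatV.mpr ⟨m, hm, hx⟩

variable (hM : IsContention M) (hN : IsContention N) (hO : IsContention O)

/-- The sync of `(M;N) ; O` associated with a tri-sync. -/
def syncL (x : Tri M N O) : Sync (comp M N) O where
  U := SDec ⟨x.U, x.V, x.miU, x.miV, x.bd1⟩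
  V := x.W
  miU := MI_SDec hM hN _
  miV := x.miW
  bd := by
    rw [flat_setTgt, flatV_SDec hM hN]
    exact x.bd2

/-- The sync of `M ; (N;O)` associated with a tri-sync. -/
def syncR (x : Tri M N O) : Sync M (comp N O) where
  U := x.U
  V := SDec ⟨x.V, x.W, x.miV, x.miW, x.bd2⟩
  miU := x.miU
  miV := MI_SDec hN hO _
  bd := by
    rw [flat_setSrc, flatU_SDec hN hO]
    exact x.bd1

lemma syncL_minimal {x : Tri M N O} (hx : x.Minimal) : (syncL hM hN x).Minimal := by
  constructor
  · rintro ⟨h1, h2⟩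
    apply hx.1
    have h1' : SDec (⟨x.U, x.V, x.miU, x.miV, x.bd1⟩ : Sync M N) = ∅ := h1
    have hU : x.U = ∅ := by
      have := flatU_SDec hM hN (⟨x.U, x.V, x.miU, x.miV, x.bd1⟩ : Sync M N)
      rw [h1', flatU_empty] at this
      exact this.symm
    have hV : x.V = ∅ := by
      have := flatV_SDec hM hN (⟨x.U, x.V, x.miU, x.miV, x.bd1⟩ : Sync M N)
      rw [h1', flatV_empty] at this
      exact this.symm
    exact ⟨hU, hV, h2⟩
  · intro s' hU' hV'
    set y : Tri M N O := ⟨flatU s'.U, flatV s'.U, s'.V,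
      flat_MI_U s'.miU, flat_MI_V s'.miU, s'.miV,
      flat_tgt_src s'.U, by rw [← flat_setTgt]; exact s'.bd⟩ with hy
    have hU'' : s'.U ⊆ SDec (⟨x.U, x.V, x.miU, x.miV, x.bd1⟩ : Sync M N) := hU'
    have hyU : y.U ⊆ x.U := by
      have := flatU_mono hU''
      rwa [flatU_SDec hM hN] at this
    have hyV : y.V ⊆ x.V := by
      have := flatV_mono hU''
      rwa [flatV_SDec hM hN] at this
    rcases hx.2 y hyU hyV hV' with h | h
    · left
      obtain ⟨h1, h2, h3⟩ := h
      refine ⟨?_, h3⟩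
      rw [Set.eq_empty_iff_forall_notMem]
      intro m hm
      rcases (sync_nontrivial_iff m.1).mp m.2.1 with ⟨u, hu⟩ | ⟨v, hv⟩
      · have : u ∈ flatU s'.U := mem_flatU.mpr ⟨m, hm, hu⟩
        rw [show flatU s'.U = ∅ from h1] at this
        exact this
      · have : v ∈ flatV s'.U := mem_flatV.mpr ⟨m, hm, hv⟩
        rw [show flatV s'.U = ∅ from h2] at this
        exact this
    · right
      obtain ⟨h1, h2, h3⟩ := h
      refine ⟨?_, h3⟩
      apply subset_antisymm hU'
      intro m hm
      apply mem_of_sub_flat hM hN s'.miU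
      · rw [show flatU s'.U = x.U from h1]; exact hm.1
      · rw [show flatV s'.U = x.V from h2]; exact hm.2

lemma syncR_minimal {x : Tri M N O} (hx : x.Minimal) : (syncR hN hO x).Minimal := by
  constructor
  · rintro ⟨h1, h2⟩
    apply hx.1
    have h2' : SDec (⟨x.V, x.W, x.miV, x.miW, x.bd2⟩ : Sync N O) = ∅ := h2
    have hV : x.V = ∅ := by
      have := flatU_SDec hN hO (⟨x.V, x.W, x.miV, x.miW, x.bd2⟩ : Sync N O)
      rw [h2', flatU_empty] at this
      exact this.symm
    have hW : x.W = ∅ := by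
      have := flatV_SDec hN hO (⟨x.V, x.W, x.miV, x.miW, x.bd2⟩ : Sync N O)
      rw [h2', flatV_empty] at this
      exact this.symm
    exact ⟨h1, hV, hW⟩
  · intro s' hU' hV'
    set y : Tri M N O := ⟨s'.U, flatU s'.V, flatV s'.V,
      s'.miU, flat_MI_U s'.miV, flat_MI_V s'.miV,
      by rw [← flat_setSrc]; exact s'.bd, flat_tgt_src s'.V⟩ with hy
    have hV'' : s'.V ⊆ SDec (⟨x.V, x.W, x.miV, x.miW, x.bd2⟩ : Sync N O) := hV'
    have hyV : y.V ⊆ x.V := by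
      have := flatU_mono hV''
      rwa [flatU_SDec hN hO] at this
    have hyW : y.W ⊆ x.W := by
      have := flatV_mono hV''
      rwa [flatV_SDec hN hO] at this
    rcases hx.2 y hU' hyV hyW with h | h
    · left
      obtain ⟨h1, h2, h3⟩ := h
      refine ⟨h1, ?_⟩
      rw [Set.eq_empty_iff_forall_notMem]
      intro m hm
      rcases (sync_nontrivial_iff m.1).mp m.2.1 with ⟨u, hu⟩ | ⟨v, hv⟩
      · have : u ∈ flatU s'.V := mem_flatU.mpr ⟨m, hm, hu⟩
        rw [show flatU s'.V = ∅ from h2] at this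
        exact this
      · have : v ∈ flatV s'.V := mem_flatV.mpr ⟨m, hm, hv⟩
        rw [show flatV s'.V = ∅ from h3] at this
        exact this
    · right
      obtain ⟨h1, h2, h3⟩ := h
      refine ⟨h1, ?_⟩
      apply subset_antisymm hV'
      intro m hm
      apply mem_of_sub_flat hN hO s'.miV
      · rw [show flatU s'.V = x.V from h2]; exact hm.1
      · rw [show flatV s'.V = x.W from h3]; exact hm.2

/-- The transition equivalence underlying associativity of composition. -/
def assocEquiv : (comp (comp M N) O).T ≃ (comp M (comp N O)).T where
  toFun t := ⟨syncR hN hO (triL t), syncR_minimal hN hO (triL_minimal hM hN hO t)⟩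
  invFun t := ⟨syncL hM hN (triR t), syncL_minimal hM hN (triR_minimal hM hN hO t)⟩
  left_inv := by
    intro t
    apply Subtype.ext
    apply sync_eq
    · show SDec _ = t.1.U
      have h1 : flatU (SDec (⟨(triL t).V, (triL t).W, (triL t).miV, (triL t).miW,
          (triL t).bd2⟩ : Sync N O)) = flatV t.1.U := flatU_SDec hN hO _
      refine SDec_eq_of_flat hM hN t.1.miU _ ?_ ?_
      · exact rfl
      · exact h1
    · show flatV (SDec (⟨(triL t).V, (triL t).W, (triL t).miV, (triL t).miW,
          (triL t).bd2⟩ : Sync N O)) = t.1.V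
      exact flatV_SDec hN hO _
  right_inv := by
    intro t
    apply Subtype.ext
    apply sync_eq
    · show flatU (SDec (⟨(triR t).U, (triR t).V, (triR t).miU, (triR t).miV,
          (triR t).bd1⟩ : Sync M N)) = t.1.U
      exact flatU_SDec hM hN _
    · show SDec _ = t.1.V
      have h2 : flatV (SDec (⟨(triR t).U, (triR t).V, (triR t).miU, (triR t).miV,
          (triR t).bd1⟩ : Sync M N)) = flatU t.1.V := flatV_SDec hM hN _
      refine SDec_eq_of_flat hN hO t.1.miV _ ?_ ?_
      · exact h2
      · exact rfl

lemma sumAssoc_image {α β γ : Type} (A : Set α) (B : Set β) (C : Set γ) :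
    (Equiv.sumAssoc α β γ) ''
      ((Sum.inl '' ((Sum.inl '' A) ∪ (Sum.inr '' B))) ∪ (Sum.inr '' C)) =
    (Sum.inl '' A) ∪ (Sum.inr '' ((Sum.inl '' B) ∪ (Sum.inr '' C))) := by
  ext x
  constructor
  · rintro ⟨y, hy, rfl⟩
    rcases hy with (⟨z, (⟨w, hw, rfl⟩ | ⟨w, hw, rfl⟩), rfl⟩ | ⟨w, hw, rfl⟩)
    · exact Or.inl ⟨w, hw, rfl⟩
    · exact Or.inr ⟨Sum.inl w, Or.inl ⟨w, hw, rfl⟩, rfl⟩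
    · exact Or.inr ⟨Sum.inr w, Or.inr ⟨w, hw, rfl⟩, rfl⟩
  · rintro (⟨w, hw, rfl⟩ | ⟨y, (⟨w, hw, rfl⟩ | ⟨w, hw, rfl⟩), rfl⟩)
    · exact ⟨Sum.inl (Sum.inl w), Or.inl ⟨Sum.inl w, Or.inl ⟨w, hw, rfl⟩, rfl⟩, rfl⟩
    · exact ⟨Sum.inl (Sum.inr w), Or.inl ⟨Sum.inr w, Or.inr ⟨w, hw, rfl⟩, rfl⟩, rfl⟩
    · exact ⟨Sum.inr w, Or.inr ⟨w, hw, rfl⟩, rfl⟩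

/-- **Associativity of composition** up to isomorphism. -/
def compAssocIso : NetIso (comp (comp M N) O) (comp M (comp N O)) where
  ep := Equiv.sumAssoc M.P N.P O.P
  et := assocEquiv hM hN hO
  pre_eq t := by
    show (Sum.inl '' setPre M (triL t).U) ∪
        (Sum.inr '' setPre (comp N O) (SDec ⟨(triL t).V, (triL t).W, (triL t).miV,
          (triL t).miW, (triL t).bd2⟩)) =
      (Equiv.sumAssoc M.P N.P O.P) ''
        ((Sum.inl '' setPre (comp M N) t.1.U) ∪ (Sum.inr '' setPre O t.1.V))
    rw [flat_setPre (SDec _), flatU_SDec hN hO, flatV_SDec hN hO,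
      flat_setPre t.1.U, sumAssoc_image]
    rfl
  post_eq t := by
    show (Sum.inl '' setPost M (triL t).U) ∪
        (Sum.inr '' setPost (comp N O) (SDec ⟨(triL t).V, (triL t).W, (triL t).miV,
          (triL t).miW, (triL t).bd2⟩)) =
      (Equiv.sumAssoc M.P N.P O.P) ''
        ((Sum.inl '' setPost (comp M N) t.1.U) ∪ (Sum.inr '' setPost O t.1.V))
    rw [flat_setPost (SDec _), flatU_SDec hN hO, flatV_SDec hN hO,
      flat_setPost t.1.U, sumAssoc_image]
    rfl
  src_eq t := by
    show setSrc M (triL t).U = setSrc (comp M N) t.1.U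
    exact (flat_setSrc t.1.U).symm
  tgt_eq t := by
    show setTgt (comp N O) (SDec ⟨(triL t).V, (triL t).W, (triL t).miV,
        (triL t).miW, (triL t).bd2⟩) = setTgt O t.1.V
    rw [flat_setTgt, flatV_SDec hN hO]
    rfl
  con_iff t u := by
    show setCon M (triL t).U (triL u).U ∨
        setCon (comp N O) (SDec ⟨(triL t).V, (triL t).W, (triL t).miV,
          (triL t).miW, (triL t).bd2⟩) (SDec ⟨(triL u).V, (triL u).W, (triL u).miV,
          (triL u).miW, (triL u).bd2⟩) ↔
      setCon (comp M N) t.1.U u.1.U ∨ setCon O t.1.V u.1.V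
    rw [flat_setCon (SDec _) (SDec _), flatU_SDec hN hO, flatU_SDec hN hO,
      flatV_SDec hN hO, flatV_SDec hN hO, flat_setCon t.1.U u.1.U]
    show setCon M (flatU t.1.U) (flatU u.1.U) ∨
        (setCon N (flatV t.1.U) (flatV u.1.U) ∨ setCon O t.1.V u.1.V) ↔ _
    tauto

end Assoc2


section TensorAssoc

open Set

/-- Associativity of the tensor product, up to cast and isomorphism. -/
def tensorAssocIso {a b c d e f : ℕ} (M : NetB a b) (N : NetB c d) (O : NetB e f) :
    NetIso (castNet (add_assoc a c e) (add_assoc b d f) (tensor (tensor M N) O))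
      (tensor M (tensor N O)) where
  ep := Equiv.sumAssoc M.P N.P O.P
  et := Equiv.sumAssoc M.T N.T O.T
  pre_eq t := by
    rcases t with (t | t) | t
    · show Sum.inl '' M.pre t = _
      show _ = (Equiv.sumAssoc M.P N.P O.P) '' (Sum.inl '' (Sum.inl '' M.pre t))
      rw [Set.image_image, Set.image_image]
      rfl
    · show Sum.inr '' (Sum.inl '' N.pre t) = _
      show _ = (Equiv.sumAssoc M.P N.P O.P) '' (Sum.inl '' (Sum.inr '' N.pre t))
      rw [Set.image_image, Set.image_image, Set.image_image]
      rfl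
    · show Sum.inr '' (Sum.inr '' O.pre t) = _
      show _ = (Equiv.sumAssoc M.P N.P O.P) '' (Sum.inr '' O.pre t)
      rw [Set.image_image, Set.image_image]
      rfl
  post_eq t := by
    rcases t with (t | t) | t
    · show Sum.inl '' M.post t = _
      show _ = (Equiv.sumAssoc M.P N.P O.P) '' (Sum.inl '' (Sum.inl '' M.post t))
      rw [Set.image_image, Set.image_image]
      rfl
    · show Sum.inr '' (Sum.inl '' N.post t) = _
      show _ = (Equiv.sumAssoc M.P N.P O.P) '' (Sum.inl '' (Sum.inr '' N.post t))
      rw [Set.image_image, Set.image_image, Set.image_image]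
      rfl
    · show Sum.inr '' (Sum.inr '' O.post t) = _
      show _ = (Equiv.sumAssoc M.P N.P O.P) '' (Sum.inr '' O.post t)
      rw [Set.image_image, Set.image_image]
      rfl
  src_eq t := by
    rcases t with (t | t) | t
    · show Fin.castAdd (c + e) '' M.src t =
        Fin.cast (add_assoc a c e) ''
          (Fin.castAdd e '' (Fin.castAdd c '' M.src t))
      ext x
      simp only [Set.mem_image, Set.image_image, Fin.ext_iff, Fin.coe_castAdd,
        Fin.coe_cast]
    · show Fin.natAdd a '' (Fin.castAdd e '' N.src t) =
        Fin.cast (add_assoc a c e) ''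
          (Fin.castAdd e '' (Fin.natAdd a '' N.src t))
      ext x
      simp only [Set.mem_image, Set.image_image, Fin.ext_iff, Fin.coe_castAdd,
        Fin.coe_cast, Fin.coe_natAdd]
    · show Fin.natAdd a '' (Fin.natAdd c '' O.src t) =
        Fin.cast (add_assoc a c e) '' (Fin.natAdd (a + c) '' O.src t)
      ext x
      simp only [Set.mem_image, Set.image_image, Fin.ext_iff, Fin.coe_cast,
        Fin.coe_natAdd]
      constructor
      · rintro ⟨i, hi, h⟩; exact ⟨i, hi, by omega⟩
      · rintro ⟨i, hi, h⟩; exact ⟨i, hi, by omega⟩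
  tgt_eq t := by
    rcases t with (t | t) | t
    · show Fin.castAdd (d + f) '' M.tgt t =
        Fin.cast (add_assoc b d f) ''
          (Fin.castAdd f '' (Fin.castAdd d '' M.tgt t))
      ext x
      simp only [Set.mem_image, Set.image_image, Fin.ext_iff, Fin.coe_castAdd,
        Fin.coe_cast]
    · show Fin.natAdd b '' (Fin.castAdd f '' N.tgt t) =
        Fin.cast (add_assoc b d f) ''
          (Fin.castAdd f '' (Fin.natAdd b '' N.tgt t))
      ext x
      simp only [Set.mem_image, Set.image_image, Fin.ext_iff, Fin.coe_castAdd,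
        Fin.coe_cast, Fin.coe_natAdd]
    · show Fin.natAdd b '' (Fin.natAdd d '' O.tgt t) =
        Fin.cast (add_assoc b d f) '' (Fin.natAdd (b + d) '' O.tgt t)
      ext x
      simp only [Set.mem_image, Set.image_image, Fin.ext_iff, Fin.coe_cast,
        Fin.coe_natAdd]
      constructor
      · rintro ⟨i, hi, h⟩; exact ⟨i, hi, by omega⟩
      · rintro ⟨i, hi, h⟩; exact ⟨i, hi, by omega⟩
  con_iff t u := by
    rcases t with (t | t) | t <;> rcases u with (u | u) | u <;> exact Iff.rfl

end TensorAssoc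

section IsoS

/-- Isomorphism of nets-with-arbitrary-boundaries. -/
def IsoS (X Y : NetS) : Prop :=
  ∃ (h1 : X.1 = Y.1) (h2 : X.2.1 = Y.2.1), Iso (castNet h1 h2 X.2.2) Y.2.2

lemma IsoS.refl (X : NetS) : IsoS X X := ⟨rfl, rfl, ⟨castNetIsoRfl _⟩⟩

lemma IsoS.symm {X Y : NetS} (h : IsoS X Y) : IsoS Y X := by
  obtain ⟨kx, lx, MX⟩ := X
  obtain ⟨ky, ly, MY⟩ := Y
  obtain ⟨h1, h2, ⟨i⟩⟩ := h
  simp only at h1 h2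
  subst h1; subst h2
  exact ⟨rfl, rfl,
    ⟨(castNetIsoRfl MY).trans (((castNetIsoRfl MX).symm.trans i).symm)⟩⟩

lemma IsoS.trans {X Y Z : NetS} (h : IsoS X Y) (h' : IsoS Y Z) : IsoS X Z := by
  obtain ⟨kx, lx, MX⟩ := X
  obtain ⟨ky, ly, MY⟩ := Y
  obtain ⟨kz, lz, MZ⟩ := Z
  obtain ⟨h1, h2, ⟨i⟩⟩ := h
  obtain ⟨h1', h2', ⟨j⟩⟩ := h'
  simp only at h1 h2 h1' h2'
  subst h1; subst h2; subst h1'; subst h2'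
  exact ⟨rfl, rfl,
    ⟨(castNetIsoRfl MX).trans
      (((castNetIsoRfl MX).symm.trans i).trans ((castNetIsoRfl MY).symm.trans j))⟩⟩

lemma IsoS.fst_eq {X Y : NetS} (h : IsoS X Y) : X.1 = Y.1 := h.choose

lemma IsoS.snd_eq {X Y : NetS} (h : IsoS X Y) : X.2.1 = Y.2.1 := h.choose_spec.choose

lemma seqS_def {X Y : NetS} (h : X.2.1 = Y.1) :
    seqS X Y = ⟨X.1, Y.2.1, comp (castNet rfl h X.2.2) Y.2.2⟩ := by
  exact dif_pos h

lemma IsoS.seqCongr {X X' Y Y' : NetS} (hXY : X.2.1 = Y.1)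
    (hX : IsoS X X') (hY : IsoS Y Y') : IsoS (seqS X Y) (seqS X' Y') := by
  obtain ⟨kx, lx, MX⟩ := X
  obtain ⟨kx', lx', MX'⟩ := X'
  obtain ⟨ky, ly, MY⟩ := Y
  obtain ⟨ky', ly', MY'⟩ := Y'
  obtain ⟨h1, h2, ⟨i⟩⟩ := hX
  obtain ⟨h1', h2', ⟨j⟩⟩ := hY
  simp only at h1 h2 h1' h2' hXY
  subst h1; subst h2; subst h1'; subst h2'; subst hXY
  refine (congrArg₂ IsoS (seqS_def (X := ⟨kx, lx, MX⟩) (Y := ⟨lx, ly, MY⟩) rfl)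
    (seqS_def (X := ⟨kx, lx, MX'⟩) (Y := ⟨lx, ly, MY'⟩) rfl)).mpr ?_
  refine ⟨rfl, rfl, ⟨(castNetIsoRfl _).trans ?_⟩⟩
  exact NetIso.compCongr
    ((castNetIsoRfl MX).trans (((castNetIsoRfl MX).symm.trans i).trans
      ((castNetIsoRfl MX').symm)))
    ((castNetIsoRfl MY).symm.trans j)

lemma IsoS.tenCongr {X X' Y Y' : NetS} (hX : IsoS X X') (hY : IsoS Y Y') :
    IsoS (tenS X Y) (tenS X' Y') := by
  obtain ⟨kx, lx, MX⟩ := X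
  obtain ⟨kx', lx', MX'⟩ := X'
  obtain ⟨ky, ly, MY⟩ := Y
  obtain ⟨ky', ly', MY'⟩ := Y'
  obtain ⟨h1, h2, ⟨i⟩⟩ := hX
  obtain ⟨h1', h2', ⟨j⟩⟩ := hY
  simp only at h1 h2 h1' h2'
  subst h1; subst h2; subst h1'; subst h2'
  refine ⟨rfl, rfl, ⟨(castNetIsoRfl _).trans ?_⟩⟩
  exact NetIso.tensorCongr ((castNetIsoRfl MX).symm.trans i)
    ((castNetIsoRfl MY).symm.trans j)

lemma IsoS.seqAssoc_aux {kx lx ly lz : ℕ} (MX : NetB kx lx) (MY : NetB lx ly)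
    (MZ : NetB ly lz) (hcX : IsContention MX) (hcY : IsContention MY)
    (hcZ : IsContention MZ) :
    IsoS (seqS (seqS ⟨kx, lx, MX⟩ ⟨lx, ly, MY⟩) ⟨ly, lz, MZ⟩)
      (seqS (⟨kx, lx, MX⟩ : NetS) (seqS ⟨lx, ly, MY⟩ ⟨ly, lz, MZ⟩)) := by
  have e1 : seqS (⟨kx, lx, MX⟩ : NetS) ⟨lx, ly, MY⟩ =
      ⟨kx, ly, comp (castNet rfl rfl MX) MY⟩ := seqS_def rfl
  have e2 : seqS (⟨kx, ly, comp (castNet rfl rfl MX) MY⟩ : NetS) ⟨ly, lz, MZ⟩ =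
      ⟨kx, lz, comp (castNet rfl rfl (comp (castNet rfl rfl MX) MY)) MZ⟩ :=
    seqS_def rfl
  have e3 : seqS (⟨lx, ly, MY⟩ : NetS) ⟨ly, lz, MZ⟩ =
      ⟨lx, lz, comp (castNet rfl rfl MY) MZ⟩ := seqS_def rfl
  have e4 : seqS (⟨kx, lx, MX⟩ : NetS) ⟨lx, lz, comp (castNet rfl rfl MY) MZ⟩ =
      ⟨kx, lz, comp (castNet rfl rfl MX) (comp (castNet rfl rfl MY) MZ)⟩ :=
    seqS_def rfl
  rw [e1, e2, e3, e4]
  refine ⟨rfl, rfl, ⟨(castNetIsoRfl _).trans ?_⟩⟩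
  have i1 : NetIso (comp (castNet rfl rfl (comp (castNet rfl rfl MX) MY)) MZ)
      (comp (comp MX MY) MZ) :=
    NetIso.compCongr ((castNetIsoRfl _).trans
      (NetIso.compCongr (castNetIsoRfl MX) (NetIso.refl MY))) (NetIso.refl MZ)
  have i2 : NetIso (comp (comp MX MY) MZ) (comp MX (comp MY MZ)) :=
    compAssocIso hcX hcY hcZ
  have i3 : NetIso (comp MX (comp MY MZ))
      (comp (castNet rfl rfl MX) (comp (castNet rfl rfl MY) MZ)) :=
    NetIso.compCongr (castNetIsoRfl MX).symm
      (NetIso.compCongr (castNetIsoRfl MY).symm (NetIso.refl MZ))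
  exact (i1.trans i2).trans i3

lemma IsoS.seqAssoc {X Y Z : NetS} (h1 : X.2.1 = Y.1) (h2 : Y.2.1 = Z.1)
    (hcX : IsContention X.2.2) (hcY : IsContention Y.2.2)
    (hcZ : IsContention Z.2.2) :
    IsoS (seqS (seqS X Y) Z) (seqS X (seqS Y Z)) := by
  obtain ⟨kx, lx, MX⟩ := X
  obtain ⟨ky, ly, MY⟩ := Y
  obtain ⟨kz, lz, MZ⟩ := Z
  simp only at h1 h2 hcX hcY hcZ
  subst h1; subst h2
  exact IsoS.seqAssoc_aux MX MY MZ hcX hcY hcZ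

lemma IsoS.tenAssoc {X Y Z : NetS} :
    IsoS (tenS (tenS X Y) Z) (tenS X (tenS Y Z)) := by
  obtain ⟨kx, lx, MX⟩ := X
  obtain ⟨ky, ly, MY⟩ := Y
  obtain ⟨kz, lz, MZ⟩ := Z
  exact ⟨add_assoc kx ky kz, add_assoc lx ly lz, ⟨tensorAssocIso MX MY MZ⟩⟩

end IsoS


section Final

variable {Var : Type}

lemma seqS_fst {X Y : NetS} (h : X.2.1 = Y.1) : (seqS X Y).1 = X.1 := by
  rw [seqS_def h]

lemma seqS_snd {X Y : NetS} (h : X.2.1 = Y.1) : (seqS X Y).2.1 = Y.2.1 := by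
  rw [seqS_def h]

lemma hw_bounds (A : Var → NetS) (w : ℕ) :
    ∀ t, HasWidth A w t → (sem A t).1 ≤ w ∧ (sem A t).2.1 ≤ w := by
  intro t h
  cases t with
  | leaf x => exact ⟨h.1, h.2.2⟩
  | seq t₁ t₂ => exact ⟨h.2.2.1, h.2.2.2⟩
  | ten t₁ t₂ => exact ⟨h.2.2.1, h.2.2.2⟩

/-- One direction of the invariance property. -/
def Half (A : Var → NetS) (w : ℕ) (t t' : WExpr Var) : Prop :=
  WT A t → WT A t' ∧ IsoS (sem A t) (sem A t') ∧
    (HasWidth A w t → HasWidth A w t')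

/-- Both directions of the invariance property. -/
def Good (A : Var → NetS) (w : ℕ) (t t' : WExpr Var) : Prop :=
  Half A w t t' ∧ Half A w t' t

lemma half_refl (A : Var → NetS) (w : ℕ) (t : WExpr Var) : Half A w t t :=
  fun h => ⟨h, IsoS.refl _, id⟩

lemma good_refl (A : Var → NetS) (w : ℕ) (t : WExpr Var) : Good A w t t :=
  ⟨half_refl A w t, half_refl A w t⟩

lemma good_symm {A : Var → NetS} {w : ℕ} {t t' : WExpr Var}
    (h : Good A w t t') : Good A w t' t := ⟨h.2, h.1⟩

lemma half_trans {A : Var → NetS} {w : ℕ} {t u v : WExpr Var}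
    (h1 : Half A w t u) (h2 : Half A w u v) : Half A w t v := by
  intro hwt
  obtain ⟨hwt1, hiso1, hhw1⟩ := h1 hwt
  obtain ⟨hwt2, hiso2, hhw2⟩ := h2 hwt1
  exact ⟨hwt2, hiso1.trans hiso2, fun h => hhw2 (hhw1 h)⟩

lemma good_trans {A : Var → NetS} {w : ℕ} {t u v : WExpr Var}
    (h1 : Good A w t u) (h2 : Good A w u v) : Good A w t v :=
  ⟨half_trans h1.1 h2.1, half_trans h2.2 h1.2⟩

lemma half_seq {A : Var → NetS} {w : ℕ} {a a' b b' : WExpr Var}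
    (ha : Half A w a a') (hb : Half A w b b') :
    Half A w (.seq a b) (.seq a' b') := by
  rintro ⟨wa, wb, m⟩
  obtain ⟨wa', isoa, hwa⟩ := ha wa
  obtain ⟨wb', isob, hwb⟩ := hb wb
  have m' : (sem A a').2.1 = (sem A b').1 := by
    rw [← isoa.snd_eq, ← isob.fst_eq]; exact m
  refine ⟨⟨wa', wb', m'⟩, ?_, ?_⟩
  · exact IsoS.seqCongr m isoa isob
  · rintro ⟨h1, h2, b1, b2⟩
    refine ⟨hwa h1, hwb h2, ?_, ?_⟩
    · show (seqS (sem A a') (sem A b')).1 ≤ w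
      rw [seqS_fst m', ← isoa.fst_eq]
      rwa [show (sem A (.seq a b)).1 = (sem A a).1 from seqS_fst m] at b1
    · show (seqS (sem A a') (sem A b')).2.1 ≤ w
      rw [seqS_snd m', ← isob.snd_eq]
      rwa [show (sem A (.seq a b)).2.1 = (sem A b).2.1 from seqS_snd m] at b2

lemma half_ten {A : Var → NetS} {w : ℕ} {a a' b b' : WExpr Var}
    (ha : Half A w a a') (hb : Half A w b b') :
    Half A w (.ten a b) (.ten a' b') := by
  rintro ⟨wa, wb⟩
  obtain ⟨wa', isoa, hwa⟩ := ha wa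
  obtain ⟨wb', isob, hwb⟩ := hb wb
  refine ⟨⟨wa', wb'⟩, ?_, ?_⟩
  · exact IsoS.tenCongr isoa isob
  · rintro ⟨h1, h2, b1, b2⟩
    refine ⟨hwa h1, hwb h2, ?_, ?_⟩
    · show (sem A a').1 + (sem A b').1 ≤ w
      rw [← isoa.fst_eq, ← isob.fst_eq]
      exact b1
    · show (sem A a').2.1 + (sem A b').2.1 ≤ w
      rw [← isoa.snd_eq, ← isob.snd_eq]
      exact b2

lemma half_seq_assoc_fwd {A : Var → NetS} (hA : ∀ x, IsContention (A x).2.2)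
    {w : ℕ} (a b c : WExpr Var) :
    Half A w (.seq (.seq a b) c) (.seq a (.seq b c)) := by
  rintro ⟨⟨wa, wb, m1⟩, wc, m2⟩
  have m2' : (sem A b).2.1 = (sem A c).1 := by
    rw [← seqS_snd m1]; exact m2
  have m3 : (sem A a).2.1 = (seqS (sem A b) (sem A c)).1 := by
    rw [seqS_fst m2']; exact m1
  refine ⟨⟨wa, ⟨wb, wc, m2'⟩, m3⟩, ?_, ?_⟩
  · exact IsoS.seqAssoc m1 m2' (sem_contention hA a) (sem_contention hA b)
      (sem_contention hA c)
  · rintro ⟨⟨ha, hb, b1, b2⟩, hc, b3, b4⟩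
    refine ⟨ha, ⟨hb, hc, ?_, ?_⟩, ?_, ?_⟩
    · show (seqS (sem A b) (sem A c)).1 ≤ w
      rw [seqS_fst m2']
      exact (hw_bounds A w b hb).1
    · show (seqS (sem A b) (sem A c)).2.1 ≤ w
      rw [seqS_snd m2']
      exact (hw_bounds A w c hc).2
    · show (seqS (sem A a) (seqS (sem A b) (sem A c))).1 ≤ w
      rw [seqS_fst m3]
      exact (hw_bounds A w a ha).1
    · show (seqS (sem A a) (seqS (sem A b) (sem A c))).2.1 ≤ w
      rw [seqS_snd m3, seqS_snd m2']
      exact (hw_bounds A w c hc).2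

lemma half_seq_assoc_bwd {A : Var → NetS} (hA : ∀ x, IsContention (A x).2.2)
    {w : ℕ} (a b c : WExpr Var) :
    Half A w (.seq a (.seq b c)) (.seq (.seq a b) c) := by
  rintro ⟨wa, ⟨wb, wc, m2'⟩, m3⟩
  have m1 : (sem A a).2.1 = (sem A b).1 := by
    rw [← seqS_fst m2']; exact m3
  have m2 : (seqS (sem A a) (sem A b)).2.1 = (sem A c).1 := by
    rw [seqS_snd m1]; exact m2'
  refine ⟨⟨⟨wa, wb, m1⟩, wc, m2⟩, ?_, ?_⟩
  · exact (IsoS.seqAssoc m1 m2' (sem_contention hA a) (sem_contention hA b)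
      (sem_contention hA c)).symm
  · rintro ⟨ha, ⟨hb, hc, b1, b2⟩, b3, b4⟩
    refine ⟨⟨ha, hb, ?_, ?_⟩, hc, ?_, ?_⟩
    · show (seqS (sem A a) (sem A b)).1 ≤ w
      rw [seqS_fst m1]
      exact (hw_bounds A w a ha).1
    · show (seqS (sem A a) (sem A b)).2.1 ≤ w
      rw [seqS_snd m1]
      exact (hw_bounds A w b hb).2
    · show (seqS (seqS (sem A a) (sem A b)) (sem A c)).1 ≤ w
      rw [seqS_fst m2, seqS_fst m1]
      exact (hw_bounds A w a ha).1
    · show (seqS (seqS (sem A a) (sem A b)) (sem A c)).2.1 ≤ w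
      rw [seqS_snd m2]
      exact (hw_bounds A w c hc).2

lemma half_ten_assoc_fwd {A : Var → NetS} {w : ℕ} (a b c : WExpr Var) :
    Half A w (.ten (.ten a b) c) (.ten a (.ten b c)) := by
  rintro ⟨⟨wa, wb⟩, wc⟩
  refine ⟨⟨wa, wb, wc⟩, IsoS.tenAssoc, ?_⟩
  rintro ⟨⟨ha, hb, b1, b2⟩, hc, b3, b4⟩
  have b3' : (sem A a).1 + (sem A b).1 + (sem A c).1 ≤ w := b3
  have b4' : (sem A a).2.1 + (sem A b).2.1 + (sem A c).2.1 ≤ w := b4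
  refine ⟨ha, ⟨hb, hc, ?_, ?_⟩, ?_, ?_⟩
  · show (sem A b).1 + (sem A c).1 ≤ w
    omega
  · show (sem A b).2.1 + (sem A c).2.1 ≤ w
    omega
  · show (sem A a).1 + ((sem A b).1 + (sem A c).1) ≤ w
    omega
  · show (sem A a).2.1 + ((sem A b).2.1 + (sem A c).2.1) ≤ w
    omega

lemma half_ten_assoc_bwd {A : Var → NetS} {w : ℕ} (a b c : WExpr Var) :
    Half A w (.ten a (.ten b c)) (.ten (.ten a b) c) := by
  rintro ⟨wa, wb, wc⟩
  refine ⟨⟨⟨wa, wb⟩, wc⟩, IsoS.tenAssoc.symm, ?_⟩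
  rintro ⟨ha, ⟨hb, hc, b1, b2⟩, b3, b4⟩
  have b3' : (sem A a).1 + ((sem A b).1 + (sem A c).1) ≤ w := b3
  have b4' : (sem A a).2.1 + ((sem A b).2.1 + (sem A c).2.1) ≤ w := b4
  refine ⟨⟨ha, hb, ?_, ?_⟩, hc, ?_, ?_⟩
  · show (sem A a).1 + (sem A b).1 ≤ w
    omega
  · show (sem A a).2.1 + (sem A b).2.1 ≤ w
    omega
  · show (sem A a).1 + (sem A b).1 + (sem A c).1 ≤ w
    omega
  · show (sem A a).2.1 + (sem A b).2.1 + (sem A c).2.1 ≤ w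
    omega

lemma good_of_step {A : Var → NetS} (hA : ∀ x, IsContention (A x).2.2) {w : ℕ}
    {t t' : WExpr Var} (h : AssocStep t t') : Good A w t t' := by
  induction h with
  | seqAssoc a b c =>
    exact ⟨half_seq_assoc_fwd hA a b c, half_seq_assoc_bwd hA a b c⟩
  | tenAssoc a b c =>
    exact ⟨half_ten_assoc_fwd a b c, half_ten_assoc_bwd a b c⟩
  | seqCongrL b _ ih =>
    exact ⟨half_seq ih.1 (half_refl A w b), half_seq ih.2 (half_refl A w b)⟩
  | seqCongrR a _ ih =>
    exact ⟨half_seq (half_refl A w a) ih.1, half_seq (half_refl A w a) ih.2⟩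
  | tenCongrL b _ ih =>
    exact ⟨half_ten ih.1 (half_refl A w b), half_ten ih.2 (half_refl A w b)⟩
  | tenCongrR a _ ih =>
    exact ⟨half_ten (half_refl A w a) ih.1, half_ten (half_refl A w a) ih.2⟩

lemma good_of_equiv {A : Var → NetS} (hA : ∀ x, IsContention (A x).2.2) {w : ℕ}
    {t t' : WExpr Var} (h : AssocEquiv t t') : Good A w t t' := by
  induction h with
  | rel _ _ h => exact good_of_step hA h
  | refl t => exact good_refl A w t
  | symm _ _ _ ih => exact good_symm ih
  | trans _ _ _ _ _ ih1 ih2 => exact good_trans ih1 ih2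

end Final

/-- Invariance of width w.r.t. associativity.
If `(t, A)` is a wiring decomposition of a net with boundaries `N : l → r`
of width `w`, and `t'` is equivalent to `t` up to associativity of `;` and
`⊗`, then `(t', A)` is also a wiring decomposition of `N` of width `w`
(in particular `⟦t'⟧_A` has left boundary `l` and right boundary `r`). -/
theorem width_invariance_assoc {Var : Type} (A : Var → NetS) (t t' : WExpr Var)
    {l r : ℕ} (N : NetB l r) (w : ℕ)
    (hdec : IsDecompOf A t N) (hwidth : HasWidth A w t)
    (hassoc : AssocEquiv t t') :
    IsDecompOf A t' N ∧ HasWidth A w t' := by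
  obtain ⟨hcon, hwt, h1, h2, hiso⟩ := hdec
  have good : Good A w t t' := good_of_equiv hcon hassoc
  obtain ⟨hwt', hisoS, hhw⟩ := good.1 hwt
  have hNt : IsoS (sem A t) ⟨l, r, N⟩ := ⟨h1, h2, hiso⟩
  have hNt' : IsoS (sem A t') ⟨l, r, N⟩ := hisoS.symm.trans hNt
  obtain ⟨h1', h2', hiso'⟩ := hNt'
  exact ⟨⟨hcon, hwt', h1', h2', hiso'⟩, hhw hwidth⟩

end NWB
end

section
/- Decomposition basis: let N : k → l be a net with boundaries with a pure decomposition N ≅ N_l ; N_r, where N_l : k → n and N_r : n → l both have nonempty place sets, and let (P_l, P_r) be the induced oriented partition of the places of N. Then the vector (bconn^{N_r}(i))_{i<n} of connections of the shared boundary ports computed in N_r is a basis of the network net(P_l → P_r), and the vector (bconn^{N_l}(i))_{i<n} computed in N_l is a basis of net(P_r → P_l). -/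
namespace NWB

variable {k n l : ℕ}

/-- Transport of a portset of `N_r` to a portset of `N` along the witnessing
isomorphism: place ports go via the isomorphism (and the right injection),
right boundary ports of `N_r` are right boundary ports of `N`.  (In a pure
decomposition no other ports occur in the relevant portsets.) -/
def liftSetR (Nl : NetB k n) (Nr : NetB n l) (N : NetB k l)
    (iso : NetIso (comp Nl Nr) N) (K : Set (Port Nr)) : Set (Port N) :=
  { q | (∃ p : Nr.P, portIn p ∈ K ∧ q = portIn (iso.ep (Sum.inr p))) ∨
        (∃ p : Nr.P, portOut p ∈ K ∧ q = portOut (iso.ep (Sum.inr p))) ∨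
        (∃ j : Fin l, bRight j ∈ K ∧ q = bRight j) }

/-- Transport of a portset of `N_l` to a portset of `N`, symmetrically. -/
def liftSetL (Nl : NetB k n) (Nr : NetB n l) (N : NetB k l)
    (iso : NetIso (comp Nl Nr) N) (K : Set (Port Nl)) : Set (Port N) :=
  { q | (∃ p : Nl.P, portIn p ∈ K ∧ q = portIn (iso.ep (Sum.inl p))) ∨
        (∃ p : Nl.P, portOut p ∈ K ∧ q = portOut (iso.ep (Sum.inl p))) ∨
        (∃ i : Fin k, bLeft i ∈ K ∧ q = bLeft i) }

/-- `bconn^{N_r}(i)`, the connection of the shared boundary port `i` computed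
in `N_r`, viewed as a connection of `N`. -/
def bconnR (Nl : NetB k n) (Nr : NetB n l) (N : NetB k l)
    (iso : NetIso (comp Nl Nr) N) (i : Fin n) : Set (Set (Port N)) :=
  liftSetR Nl Nr N iso '' conn Nr (bLeft i)

/-- `bconn^{N_l}(i)`, the connection of the shared boundary port `i` computed
in `N_l`, viewed as a connection of `N`. -/
def bconnL (Nl : NetB k n) (Nr : NetB n l) (N : NetB k l)
    (iso : NetIso (comp Nl Nr) N) (i : Fin n) : Set (Set (Port N)) :=
  liftSetL Nl Nr N iso '' conn Nl (bRight i)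

/-- The left part of the oriented partition of the places of `N` induced by
the witnessing isomorphism. -/
def partL (Nl : NetB k n) (Nr : NetB n l) (N : NetB k l)
    (iso : NetIso (comp Nl Nr) N) : Set N.P :=
  Set.range (fun p : Nl.P => iso.ep (Sum.inl p))

/-- The right part of the induced oriented partition. -/
def partR (Nl : NetB k n) (Nr : NetB n l) (N : NetB k l)
    (iso : NetIso (comp Nl Nr) N) : Set N.P :=
  Set.range (fun p : Nr.P => iso.ep (Sum.inr p))

end NWB

namespace NWB

section Aux

variable {k n l : ℕ}

@[simp] lemma portIn_mem_tports {N : NetB k l} {p : N.P} {t : N.T} :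
    portIn p ∈ tports N t ↔ p ∈ N.post t := by
  simp only [tports, Set.mem_union, Set.mem_image]
  simp [tports, portIn, portOut, bLeft, bRight, Port]

@[simp] lemma portOut_mem_tports {N : NetB k l} {p : N.P} {t : N.T} :
    portOut p ∈ tports N t ↔ p ∈ N.pre t := by
  simp only [tports, Set.mem_union, Set.mem_image]
  simp [tports, portIn, portOut, bLeft, bRight, Port]

@[simp] lemma bLeft_mem_tports {N : NetB k l} {i : Fin k} {t : N.T} :
    bLeft i ∈ tports N t ↔ i ∈ N.src t := by
  simp only [tports, Set.mem_union, Set.mem_image]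
  simp [tports, portIn, portOut, bLeft, bRight, Port]

@[simp] lemma bRight_mem_tports {N : NetB k l} {j : Fin l} {t : N.T} :
    bRight j ∈ tports N t ↔ j ∈ N.tgt t := by
  simp only [tports, Set.mem_union, Set.mem_image]
  simp [tports, portIn, portOut, bLeft, bRight, Port]

@[simp] lemma setTgt_singleton {M : NetB k l} (u : M.T) : setTgt M {u} = M.tgt u := by
  simp [setTgt]

@[simp] lemma setSrc_singleton {M : NetB k l} (u : M.T) : setSrc M {u} = M.src u := by
  simp [setSrc]

@[simp] lemma setTgt_empty (M : NetB k l) : setTgt M (∅ : Set M.T) = ∅ := by simp [setTgt]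
@[simp] lemma setSrc_empty (M : NetB k l) : setSrc M (∅ : Set M.T) = ∅ := by simp [setSrc]

lemma MI_singleton (M : NetB k l) (u : M.T) : MI M {u} := by
  intro a ha b hb _; simp_all

lemma MI_empty (M : NetB k l) : MI M (∅ : Set M.T) := by intro a ha; simp_all

lemma pure_tgt_singleton {Nl : NetB k n} {Nr : NetB n l} (hpure : Pure Nl Nr)
    {u : Nl.T} {j : Fin n} (hj : j ∈ Nl.tgt u) : Nl.tgt u = {j} := by
  ext i
  simp only [Set.mem_singleton_iff]
  refine ⟨fun hi => ?_, fun h => h ▸ hj⟩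
  by_contra hne
  have hmem : (bRight j : Port Nl) ∈ tports Nl u := by simpa using hj
  have hmem' : (bRight i : Port Nl) ∈ tports Nl u := by simpa using hi
  have hij : (bRight i : Port Nl) ≠ bRight j := by simp [bRight, Port, hne]
  have hsub : {(bRight j : Port Nl)} ⊂ tports Nl u := by
    refine ⟨by simpa using hmem, fun hs => ?_⟩
    exact hij (hs hmem')
  exact hpure.1 j _ ⟨u, hsub, rfl⟩ i ⟨hmem', hij⟩

lemma pure_src_singleton {Nl : NetB k n} {Nr : NetB n l} (hpure : Pure Nl Nr)
    {v : Nr.T} {j : Fin n} (hj : j ∈ Nr.src v) : Nr.src v = {j} := by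
  ext i
  simp only [Set.mem_singleton_iff]
  refine ⟨fun hi => ?_, fun h => h ▸ hj⟩
  by_contra hne
  have hmem : (bLeft j : Port Nr) ∈ tports Nr v := by simpa using hj
  have hmem' : (bLeft i : Port Nr) ∈ tports Nr v := by simpa using hi
  have hij : (bLeft i : Port Nr) ≠ bLeft j := by simp [bLeft, Port, hne]
  have hsub : {(bLeft j : Port Nr)} ⊂ tports Nr v := by
    refine ⟨by simpa using hmem, fun hs => ?_⟩
    exact hij (hs hmem')
  exact hpure.2 j _ ⟨v, hsub, rfl⟩ i ⟨hmem', hij⟩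

end Aux
section NeLemmas
variable {k l : ℕ} {N : NetB k l}

@[simp] lemma portIn_ne_bLeft (p : N.P) (i : Fin k) : (portIn p : Port N) ≠ bLeft i := by
  simp [portIn, bLeft, Port]
@[simp] lemma portOut_ne_bLeft (p : N.P) (i : Fin k) : (portOut p : Port N) ≠ bLeft i := by
  simp [portOut, bLeft, Port]
@[simp] lemma bRight_ne_bLeft (j : Fin l) (i : Fin k) : (bRight j : Port N) ≠ bLeft i := by
  simp [bRight, bLeft, Port]
@[simp] lemma portIn_ne_bRight (p : N.P) (j : Fin l) : (portIn p : Port N) ≠ bRight j := by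
  simp [portIn, bRight, Port]
@[simp] lemma portOut_ne_bRight (p : N.P) (j : Fin l) : (portOut p : Port N) ≠ bRight j := by
  simp [portOut, bRight, Port]
@[simp] lemma bLeft_ne_bRight (i : Fin k) (j : Fin l) : (bLeft i : Port N) ≠ bRight j := by
  simp [bLeft, bRight, Port]

end NeLemmas
section Main

variable {k n l : ℕ} (Nl : NetB k n) (Nr : NetB n l) (N : NetB k l)
  (iso : NetIso (comp Nl Nr) N)

/-- The sync consisting of a single transition on each side, synchronising
through the single shared port `j`. -/
def pairSync (u : Nl.T) (v : Nr.T) (j : Fin n)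
    (htgt : Nl.tgt u = {j}) (hsrc : Nr.src v = {j}) : Sync Nl Nr :=
  ⟨{u}, {v}, MI_singleton Nl u, MI_singleton Nr v, by simp [htgt, hsrc]⟩

lemma pairSync_minimal (u : Nl.T) (v : Nr.T) (j : Fin n)
    (htgt : Nl.tgt u = {j}) (hsrc : Nr.src v = {j}) :
    (pairSync Nl Nr u v j htgt hsrc).Minimal := by
  constructor
  · rintro ⟨h1, -⟩
    exact Set.singleton_ne_empty u h1
  · intro s' hU hV
    rcases Set.subset_singleton_iff_eq.mp hU with h | h <;>
      rcases Set.subset_singleton_iff_eq.mp hV with h' | h'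
    · exact Or.inl ⟨h, h'⟩
    · exfalso
      have hb := s'.bd
      rw [h, h', setTgt_empty, setSrc_singleton, hsrc] at hb
      exact Set.singleton_ne_empty j hb.symm
    · exfalso
      have hb := s'.bd
      rw [h, h', setTgt_singleton, setSrc_empty, htgt] at hb
      exact Set.singleton_ne_empty j hb
    · exact Or.inr ⟨h, h'⟩

lemma minimal_both (hpure : Pure Nl Nr) {s : Sync Nl Nr} (hmin : s.Minimal)
    (hU : s.U.Nonempty) (hV : s.V.Nonempty) :
    ∃ u v j, s.U = {u} ∧ s.V = {v} ∧ Nl.tgt u = {j} ∧ Nr.src v = {j} := by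
  have hB : (setTgt Nl s.U).Nonempty := by
    by_contra hB
    rw [Set.not_nonempty_iff_eq_empty] at hB
    obtain ⟨u, hu⟩ := hU
    have htu : Nl.tgt u = ∅ := by
      have hsub : Nl.tgt u ⊆ setTgt Nl s.U := fun i hi => Set.mem_biUnion hu hi
      rw [hB] at hsub
      exact Set.subset_empty_iff.mp hsub
    rcases hmin.2 ⟨{u}, ∅, MI_singleton Nl u, MI_empty Nr, by simp [htu]⟩
        (Set.singleton_subset_iff.mpr hu) (Set.empty_subset _) with htr | heq
    · exact Set.singleton_ne_empty u htr.1
    · exact hV.ne_empty heq.2.symm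
  obtain ⟨j, hj⟩ := hB
  obtain ⟨u, hu, hju⟩ := Set.mem_iUnion₂.mp hj
  have htgt := pure_tgt_singleton hpure hju
  have hj' : j ∈ setSrc Nr s.V := s.bd ▸ hj
  obtain ⟨v, hv, hjv⟩ := Set.mem_iUnion₂.mp hj'
  have hsrc := pure_src_singleton hpure hjv
  rcases hmin.2 (pairSync Nl Nr u v j htgt hsrc)
      (Set.singleton_subset_iff.mpr hu) (Set.singleton_subset_iff.mpr hv) with htr | heq
  · exact absurd htr.1 (Set.singleton_ne_empty u)
  · exact ⟨u, v, j, heq.1.symm, heq.2.symm, htgt, hsrc⟩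

/-- The portset of a transition of `N_l`, viewed inside `N` (shared boundary
ports are dropped). -/
def lportsL (t : Nl.T) : Set (Port N) :=
  ((fun p => portOut (iso.ep (Sum.inl p))) '' Nl.pre t) ∪
  ((fun p => portIn (iso.ep (Sum.inl p))) '' Nl.post t) ∪
  (bLeft '' Nl.src t)

/-- The portset of a transition of `N_r`, viewed inside `N`. -/
def lportsR (t : Nr.T) : Set (Port N) :=
  ((fun p => portOut (iso.ep (Sum.inr p))) '' Nr.pre t) ∪
  ((fun p => portIn (iso.ep (Sum.inr p))) '' Nr.post t) ∪
  (bRight '' Nr.tgt t)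

set_option maxHeartbeats 1000000 in
set_option maxRecDepth 4000 in
lemma tports_et (t' : (comp Nl Nr).T) :
    tports N (iso.et t') =
      (⋃ u ∈ t'.1.U, lportsL Nl Nr N iso u) ∪ ⋃ v ∈ t'.1.V, lportsR Nl Nr N iso v := by
  ext x
  simp only [tports, iso.pre_eq t', iso.post_eq t', iso.src_eq t', iso.tgt_eq t']
  simp only [comp, setPre, setPost, setSrc, setTgt, Set.image_union, Set.mem_union,
    Set.mem_image, Set.mem_iUnion, Set.image_iUnion, lportsL, lportsR, exists_prop]
  aesop (config := { maxRuleApplications := 10000 })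

lemma tports_et' (s : Sync Nl Nr) (hm : s.Minimal) :
    tports N (iso.et ⟨s, hm⟩) =
      (⋃ u ∈ s.U, lportsL Nl Nr N iso u) ∪ ⋃ v ∈ s.V, lportsR Nl Nr N iso v :=
  tports_et Nl Nr N iso ⟨s, hm⟩

lemma tports_et_eq {s : Sync Nl Nr} (hm : s.Minimal) {u : Nl.T} {v : Nr.T}
    (hU : s.U = {u}) (hV : s.V = {v}) :
    tports N (iso.et ⟨s, hm⟩) = lportsL Nl Nr N iso u ∪ lportsR Nl Nr N iso v := by
  rw [tports_et', hU, hV, Set.biUnion_singleton, Set.biUnion_singleton]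

lemma mem_eportsL (q : Port N) :
    q ∈ eportsL N (partL Nl Nr N iso) ↔
      (∃ p : Nl.P, q = portIn (iso.ep (Sum.inl p))) ∨
      (∃ p : Nl.P, q = portOut (iso.ep (Sum.inl p))) ∨
      (∃ i : Fin k, q = bLeft i) := by
  simp only [eportsL, partL, Set.mem_union, Set.mem_image, Set.mem_range]
  aesop

lemma mem_eportsR (q : Port N) :
    q ∈ eportsR N (partR Nl Nr N iso) ↔
      (∃ p : Nr.P, q = portIn (iso.ep (Sum.inr p))) ∨
      (∃ p : Nr.P, q = portOut (iso.ep (Sum.inr p))) ∨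
      (∃ j' : Fin l, q = bRight j') := by
  simp only [eportsR, partR, Set.mem_union, Set.mem_image, Set.mem_range]
  aesop

lemma ep_inl_ne_inr (p : Nl.P) (p' : Nr.P) :
    iso.ep (Sum.inl p) ≠ iso.ep (Sum.inr p') := by
  intro h
  simpa using iso.ep.injective h

lemma eportsLR_disjoint {q : Port N} (hL : q ∈ eportsL N (partL Nl Nr N iso)) :
    q ∉ eportsR N (partR Nl Nr N iso) := by
  rw [mem_eportsL] at hL
  rw [mem_eportsR]
  rcases hL with ⟨p, rfl⟩ | ⟨p, rfl⟩ | ⟨i, rfl⟩ <;>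
    rintro (⟨p', h⟩ | ⟨p', h⟩ | ⟨j', h⟩) <;>
    simp only [portIn, portOut, bLeft, bRight, Port, Sum.inl.injEq, Sum.inr.injEq,
      reduceCtorEq, EmbeddingLike.apply_eq_iff_eq] at h <;>
    exact ep_inl_ne_inr Nl Nr N iso _ _ h

lemma lportsL_memL {t : Nl.T} {x : Port N} (h : x ∈ lportsL Nl Nr N iso t) :
    x ∈ eportsL N (partL Nl Nr N iso) := by
  rw [mem_eportsL]
  rcases h with (⟨p, _, rfl⟩ | ⟨p, _, rfl⟩) | ⟨i, _, rfl⟩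
  · exact Or.inr (Or.inl ⟨p, rfl⟩)
  · exact Or.inl ⟨p, rfl⟩
  · exact Or.inr (Or.inr ⟨i, rfl⟩)

lemma lportsR_memR {t : Nr.T} {x : Port N} (h : x ∈ lportsR Nl Nr N iso t) :
    x ∈ eportsR N (partR Nl Nr N iso) := by
  rw [mem_eportsR]
  rcases h with (⟨p, _, rfl⟩ | ⟨p, _, rfl⟩) | ⟨j', _, rfl⟩
  · exact Or.inr (Or.inl ⟨p, rfl⟩)
  · exact Or.inl ⟨p, rfl⟩
  · exact Or.inr (Or.inr ⟨j', rfl⟩)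

lemma tports_subL {s : Sync Nl Nr} (hm : s.Minimal) (hV : s.V = ∅) :
    tports N (iso.et ⟨s, hm⟩) ⊆ eportsL N (partL Nl Nr N iso) := by
  rw [tports_et' Nl Nr N iso s hm, hV]
  simp only [Set.biUnion_empty, Set.union_empty]
  intro x hx
  obtain ⟨u, -, hx⟩ := Set.mem_iUnion₂.mp hx
  exact lportsL_memL Nl Nr N iso hx

lemma tports_subR {s : Sync Nl Nr} (hm : s.Minimal) (hU : s.U = ∅) :
    tports N (iso.et ⟨s, hm⟩) ⊆ eportsR N (partR Nl Nr N iso) := by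
  rw [tports_et' Nl Nr N iso s hm, hU]
  simp only [Set.biUnion_empty, Set.empty_union]
  intro x hx
  obtain ⟨v, -, hx⟩ := Set.mem_iUnion₂.mp hx
  exact lportsR_memR Nl Nr N iso hx

lemma liftSetR_eq (v : Nr.T) (j : Fin n) :
    liftSetR Nl Nr N iso (tports Nr v \ {bLeft j}) = lportsR Nl Nr N iso v := by
  ext x
  simp only [liftSetR, Set.mem_setOf_eq, Set.mem_diff, Set.mem_singleton_iff,
    portIn_mem_tports, portOut_mem_tports, bRight_mem_tports, lportsR, Set.mem_union,
    Set.mem_image, portIn_ne_bLeft, portOut_ne_bLeft, bRight_ne_bLeft, portIn_ne_bRight,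
    portOut_ne_bRight, bLeft_ne_bRight, not_false_iff, and_true]
  aesop

lemma liftSetL_eq (u : Nl.T) (j : Fin n) :
    liftSetL Nl Nr N iso (tports Nl u \ {bRight j}) = lportsL Nl Nr N iso u := by
  ext x
  simp only [liftSetL, Set.mem_setOf_eq, Set.mem_diff, Set.mem_singleton_iff,
    portIn_mem_tports, portOut_mem_tports, bLeft_mem_tports, lportsL, Set.mem_union,
    Set.mem_image, portIn_ne_bLeft, portOut_ne_bLeft, bRight_ne_bLeft, portIn_ne_bRight,
    portOut_ne_bRight, bLeft_ne_bRight, not_false_iff, and_true]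
  aesop

lemma key_interL {s : Sync Nl Nr} (hm : s.Minimal) {u : Nl.T} {v : Nr.T}
    (hU : s.U = {u}) (hV : s.V = {v}) {q : Port N}
    (hq : q ∈ eportsL N (partL Nl Nr N iso)) (j : Fin n) :
    (tports N (iso.et ⟨s, hm⟩) \ {q}) ∩ eportsR N (partR Nl Nr N iso) =
      liftSetR Nl Nr N iso (tports Nr v \ {bLeft j}) := by
  have hdisj := eportsLR_disjoint Nl Nr N iso hq
  rw [liftSetR_eq, tports_et_eq Nl Nr N iso hm hU hV]
  ext x
  constructor
  · rintro ⟨⟨hx, -⟩, hxR⟩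
    rcases hx with hxL | hx
    · exact absurd hxR (eportsLR_disjoint Nl Nr N iso (lportsL_memL Nl Nr N iso hxL))
    · exact hx
  · intro hx
    have hxR := lportsR_memR Nl Nr N iso hx
    exact ⟨⟨Or.inr hx, fun he => hdisj (he ▸ hxR)⟩, hxR⟩

lemma key_interR {s : Sync Nl Nr} (hm : s.Minimal) {u : Nl.T} {v : Nr.T}
    (hU : s.U = {u}) (hV : s.V = {v}) {q : Port N}
    (hq : q ∈ eportsR N (partR Nl Nr N iso)) (j : Fin n) :
    (tports N (iso.et ⟨s, hm⟩) \ {q}) ∩ eportsL N (partL Nl Nr N iso) =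
      liftSetL Nl Nr N iso (tports Nl u \ {bRight j}) := by
  rw [liftSetL_eq, tports_et_eq Nl Nr N iso hm hU hV]
  ext x
  constructor
  · rintro ⟨⟨hx, -⟩, hxL⟩
    rcases hx with hx | hxR
    · exact hx
    · exact absurd (lportsR_memR Nl Nr N iso hxR) (eportsLR_disjoint Nl Nr N iso hxL)
  · intro hx
    have hxL := lportsL_memL Nl Nr N iso hx
    exact ⟨⟨Or.inl hx, fun he => eportsLR_disjoint Nl Nr N iso hxL (by rw [he]; exact hq)⟩,
      hxL⟩

lemma lportsR_nonempty {v : Nr.T} {j : Fin n} (hsrc : Nr.src v = {j})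
    (h : {(bLeft j : Port Nr)} ⊂ tports Nr v) : (lportsR Nl Nr N iso v).Nonempty := by
  obtain ⟨x, hx, hxq⟩ := Set.exists_of_ssubset h
  simp only [tports, Set.mem_union, Set.mem_image] at hx
  rcases hx with ((⟨p, hp, rfl⟩ | ⟨p, hp, rfl⟩) | ⟨i, hi, rfl⟩) | ⟨j', hj', rfl⟩
  · exact ⟨portOut (iso.ep (Sum.inr p)), Or.inl (Or.inl ⟨p, hp, rfl⟩)⟩
  · exact ⟨portIn (iso.ep (Sum.inr p)), Or.inl (Or.inr ⟨p, hp, rfl⟩)⟩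
  · rw [hsrc] at hi
    exact absurd (by rw [hi]; exact rfl) hxq
  · exact ⟨bRight j', Or.inr ⟨j', hj', rfl⟩⟩

lemma lportsL_nonempty {u : Nl.T} {j : Fin n} (htgt : Nl.tgt u = {j})
    (h : {(bRight j : Port Nl)} ⊂ tports Nl u) : (lportsL Nl Nr N iso u).Nonempty := by
  obtain ⟨x, hx, hxq⟩ := Set.exists_of_ssubset h
  simp only [tports, Set.mem_union, Set.mem_image] at hx
  rcases hx with ((⟨p, hp, rfl⟩ | ⟨p, hp, rfl⟩) | ⟨i, hi, rfl⟩) | ⟨j', hj', rfl⟩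
  · exact ⟨portOut (iso.ep (Sum.inl p)), Or.inl (Or.inl ⟨p, hp, rfl⟩)⟩
  · exact ⟨portIn (iso.ep (Sum.inl p)), Or.inl (Or.inr ⟨p, hp, rfl⟩)⟩
  · exact ⟨bLeft i, Or.inr ⟨i, hi, rfl⟩⟩
  · rw [htgt] at hj'
    exact absurd (by rw [hj']; exact rfl) hxq

lemma lportsR_not_subset {v : Nr.T} {j : Fin n}
    (h : (lportsR Nl Nr N iso v).Nonempty) : ¬ tports Nr v ⊆ {bLeft j} := by
  obtain ⟨x, hx⟩ := h
  intro hsub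
  rcases hx with (⟨p, hp, rfl⟩ | ⟨p, hp, rfl⟩) | ⟨j', hj', rfl⟩
  · have := hsub (portOut_mem_tports.mpr hp)
    exact portOut_ne_bLeft _ _ this
  · have := hsub (portIn_mem_tports.mpr hp)
    exact portIn_ne_bLeft _ _ this
  · have := hsub (bRight_mem_tports.mpr hj')
    exact bRight_ne_bLeft _ _ this

lemma lportsL_not_subset {u : Nl.T} {j : Fin n}
    (h : (lportsL Nl Nr N iso u).Nonempty) : ¬ tports Nl u ⊆ {bRight j} := by
  obtain ⟨x, hx⟩ := h
  intro hsub
  rcases hx with (⟨p, hp, rfl⟩ | ⟨p, hp, rfl⟩) | ⟨i, hi, rfl⟩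
  · have := hsub (portOut_mem_tports.mpr hp)
    exact portOut_ne_bRight _ _ this
  · have := hsub (portIn_mem_tports.mpr hp)
    exact portIn_ne_bRight _ _ this
  · have := hsub (bLeft_mem_tports.mpr hi)
    exact bLeft_ne_bRight _ _ this

end Main

/-- Decomposition basis.  Let `N : k → l` be a net with
boundaries with a pure decomposition `N ≅ N_l ; N_r`, where `N_l : k → n`
and `N_r : n → l` both have nonempty place sets, and let `(P_l, P_r)` be the
induced oriented partition of the places of `N`.  Then
`(bconn^{N_r}(i))_{i<n}` is a basis of `net(P_l → P_r)` and
`(bconn^{N_l}(i))_{i<n}` is a basis of `net(P_r → P_l)`. -/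
theorem decomposition_basis {k n l : ℕ} (Nl : NetB k n) (Nr : NetB n l) (N : NetB k l)
    (hNl : IsContention Nl) (hNr : IsContention Nr) (hN : IsContention N)
    (hPl : Nonempty Nl.P) (hPr : Nonempty Nr.P)
    (iso : NetIso (comp Nl Nr) N) (hpure : Pure Nl Nr) :
    IsBasis (bconnR Nl Nr N iso)
      (networkLR N (partL Nl Nr N iso) (partR Nl Nr N iso)) ∧
    IsBasis (bconnL Nl Nr N iso)
      (networkRL N (partL Nl Nr N iso) (partR Nl Nr N iso)) := by
  classical
  constructor
  · rintro c ⟨q, hq, rfl⟩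
    refine ⟨(Set.toFinite
      {j : Fin n | ∃ t : Nl.T, j ∈ Nl.tgt t ∧ q ∈ lportsL Nl Nr N iso t}).toFinset, ?_⟩
    ext X
    simp only [Set.mem_iUnion, Set.Finite.mem_toFinset, Set.mem_setOf_eq, exists_prop]
    constructor
    · rintro ⟨K, ⟨t, hss, rfl⟩, hne, rfl⟩
      obtain ⟨⟨s, hm⟩, rfl⟩ := iso.et.surjective t
      have hVne : s.V.Nonempty := by
        rw [Set.nonempty_iff_ne_empty]
        intro hVe
        obtain ⟨x, ⟨hxT, -⟩, hxR⟩ := hne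
        exact eportsLR_disjoint Nl Nr N iso (tports_subL Nl Nr N iso hm hVe hxT) hxR
      have hUne : s.U.Nonempty := by
        rw [Set.nonempty_iff_ne_empty]
        intro hUe
        have hqT : q ∈ tports N (iso.et ⟨s, hm⟩) := hss.1 rfl
        exact eportsLR_disjoint Nl Nr N iso hq (tports_subR Nl Nr N iso hm hUe hqT)
      obtain ⟨u, v, j, hU, hV, htgt, hsrc⟩ := minimal_both Nl Nr hpure hm hUne hVne
      have hqT : q ∈ tports N (iso.et ⟨s, hm⟩) := hss.1 rfl
      have hqL : q ∈ lportsL Nl Nr N iso u := by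
        rw [tports_et_eq Nl Nr N iso hm hU hV] at hqT
        rcases hqT with h | h
        · exact h
        · exact absurd (lportsR_memR Nl Nr N iso h) (eportsLR_disjoint Nl Nr N iso hq)
      have hkey := key_interL Nl Nr N iso hm hU hV hq j
      refine ⟨j, ⟨u, by rw [htgt]; exact rfl, hqL⟩, ?_⟩
      rw [hkey]
      refine ⟨tports Nr v \ {bLeft j}, ⟨v, ⟨?_, ?_⟩, rfl⟩, rfl⟩
      · exact Set.singleton_subset_iff.mpr (bLeft_mem_tports.mpr (by rw [hsrc]; exact rfl))
      · intro hsub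
        rw [hkey, liftSetR_eq] at hne
        exact lportsR_not_subset Nl Nr N iso hne hsub
    · rintro ⟨j, ⟨u, hju, hqu⟩, X, ⟨v, hvss, rfl⟩, rfl⟩
      have htgt : Nl.tgt u = {j} := pure_tgt_singleton hpure hju
      have hjv : j ∈ Nr.src v := bLeft_mem_tports.mp (hvss.1 rfl)
      have hsrc : Nr.src v = {j} := pure_src_singleton hpure hjv
      have hm := pairSync_minimal Nl Nr u v j htgt hsrc
      have hkey := key_interL Nl Nr N iso hm rfl rfl hq j
      have hne : (lportsR Nl Nr N iso v).Nonempty :=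
        lportsR_nonempty Nl Nr N iso hsrc hvss
      have hqT : q ∈ tports N (iso.et ⟨pairSync Nl Nr u v j htgt hsrc, hm⟩) := by
        rw [tports_et_eq Nl Nr N iso hm rfl rfl]
        exact Or.inl hqu
      refine ⟨tports N (iso.et ⟨pairSync Nl Nr u v j htgt hsrc, hm⟩) \ {q},
        ⟨iso.et ⟨pairSync Nl Nr u v j htgt hsrc, hm⟩, ⟨Set.singleton_subset_iff.mpr hqT, ?_⟩,
          rfl⟩, ?_, ?_⟩
      · intro hcon
        obtain ⟨x, hx⟩ := hne
        have hx1 : x ∈ tports N (iso.et ⟨pairSync Nl Nr u v j htgt hsrc, hm⟩) := by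
          rw [tports_et_eq Nl Nr N iso hm rfl rfl]
          exact Or.inr hx
        have hxq : x = q := hcon hx1
        exact eportsLR_disjoint Nl Nr N iso hq (hxq ▸ lportsR_memR Nl Nr N iso hx)
      · rw [hkey, liftSetR_eq]
        exact hne
      · exact hkey.symm
  · rintro c ⟨q, hq, rfl⟩
    refine ⟨(Set.toFinite
      {j : Fin n | ∃ t : Nr.T, j ∈ Nr.src t ∧ q ∈ lportsR Nl Nr N iso t}).toFinset, ?_⟩
    ext X
    simp only [Set.mem_iUnion, Set.Finite.mem_toFinset, Set.mem_setOf_eq, exists_prop]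
    constructor
    · rintro ⟨K, ⟨t, hss, rfl⟩, hne, rfl⟩
      obtain ⟨⟨s, hm⟩, rfl⟩ := iso.et.surjective t
      have hUne : s.U.Nonempty := by
        rw [Set.nonempty_iff_ne_empty]
        intro hUe
        obtain ⟨x, ⟨hxT, -⟩, hxL⟩ := hne
        exact eportsLR_disjoint Nl Nr N iso hxL (tports_subR Nl Nr N iso hm hUe hxT)
      have hVne : s.V.Nonempty := by
        rw [Set.nonempty_iff_ne_empty]
        intro hVe
        have hqT : q ∈ tports N (iso.et ⟨s, hm⟩) := hss.1 rfl
        exact eportsLR_disjoint Nl Nr N iso (tports_subL Nl Nr N iso hm hVe hqT) hq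
      obtain ⟨u, v, j, hU, hV, htgt, hsrc⟩ := minimal_both Nl Nr hpure hm hUne hVne
      have hqT : q ∈ tports N (iso.et ⟨s, hm⟩) := hss.1 rfl
      have hqR : q ∈ lportsR Nl Nr N iso v := by
        rw [tports_et_eq Nl Nr N iso hm hU hV] at hqT
        rcases hqT with h | h
        · exact absurd hq (eportsLR_disjoint Nl Nr N iso (lportsL_memL Nl Nr N iso h))
        · exact h
      have hkey := key_interR Nl Nr N iso hm hU hV hq j
      refine ⟨j, ⟨v, by rw [hsrc]; exact rfl, hqR⟩, ?_⟩
      rw [hkey]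
      refine ⟨tports Nl u \ {bRight j}, ⟨u, ⟨?_, ?_⟩, rfl⟩, rfl⟩
      · exact Set.singleton_subset_iff.mpr (bRight_mem_tports.mpr (by rw [htgt]; exact rfl))
      · intro hsub
        rw [hkey, liftSetL_eq] at hne
        exact lportsL_not_subset Nl Nr N iso hne hsub
    · rintro ⟨j, ⟨v, hjv, hqv⟩, X, ⟨u, huss, rfl⟩, rfl⟩
      have hsrc : Nr.src v = {j} := pure_src_singleton hpure hjv
      have hju : j ∈ Nl.tgt u := bRight_mem_tports.mp (huss.1 rfl)
      have htgt : Nl.tgt u = {j} := pure_tgt_singleton hpure hju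
      have hm := pairSync_minimal Nl Nr u v j htgt hsrc
      have hkey := key_interR Nl Nr N iso hm rfl rfl hq j
      have hne : (lportsL Nl Nr N iso u).Nonempty :=
        lportsL_nonempty Nl Nr N iso htgt huss
      have hqT : q ∈ tports N (iso.et ⟨pairSync Nl Nr u v j htgt hsrc, hm⟩) := by
        rw [tports_et_eq Nl Nr N iso hm rfl rfl]
        exact Or.inr hqv
      refine ⟨tports N (iso.et ⟨pairSync Nl Nr u v j htgt hsrc, hm⟩) \ {q},
        ⟨iso.et ⟨pairSync Nl Nr u v j htgt hsrc, hm⟩, ⟨Set.singleton_subset_iff.mpr hqT, ?_⟩,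
          rfl⟩, ?_, ?_⟩
      · intro hcon
        obtain ⟨x, hx⟩ := hne
        have hx1 : x ∈ tports N (iso.et ⟨pairSync Nl Nr u v j htgt hsrc, hm⟩) := by
          rw [tports_et_eq Nl Nr N iso hm rfl rfl]
          exact Or.inl hx
        have hxq : x = q := hcon hx1
        exact eportsLR_disjoint Nl Nr N iso (hxq ▸ lportsL_memL Nl Nr N iso hx) hq
      · rw [hkey, liftSetL_eq]
        exact hne
      · exact hkey.symm

end NWB
end
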